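/- arXiv:1709.08710 — 15 statements merged into one kernel-verified Lean document; each statement's English description precedes it below -/
import Mathlib

section
/- Assume s12 ≠ 0. Then |s22| < 1, the quantity α_R := s11 + s12·conj(s22)·s12/(1 − |s22|²) equals 0, and the quantity ρ_R := |s12·s12|/(1 − |s22|²) equals 1. -/
/-- For a unitary symmetric 2×2 matrix with `s12 ≠ 0`, one has `|s22| < 1`,
`α_R = s11 + s12 * conj s22 * s12 / (1 - |s22|^2) = 0` and
`ρ_R = |s12 * s12| / (1 - |s22|^2) = 1`. -/
theorem center_zero_radius_one (s11 s12 s21 s22 : ℂ)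
    (hU : (!![s11, s12; s21, s22] : Matrix (Fin 2) (Fin 2) ℂ) *
      (!![s11, s12; s21, s22] : Matrix (Fin 2) (Fin 2) ℂ).conjTranspose = 1)
    (hSym : s21 = s12) (h12 : s12 ≠ 0) :
    ‖s22‖ < 1 ∧
    s11 + s12 * (starRingEnd ℂ s22) * s12 / (1 - (‖s22‖ : ℂ) ^ 2) = 0 ∧
    ‖s12 * s12‖ / (1 - ‖s22‖ ^ 2) = 1 := by
  rw [hSym] at hU
  have h22 := congrFun (congrFun hU 1) 1
  have h10 := congrFun (congrFun hU 1) 0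
  simp [Matrix.mul_apply, Fin.sum_univ_two, Matrix.conjTranspose_apply, Matrix.one_apply] at h22 h10
  -- h22 : s12 * conj s12 + s22 * conj s22 = 1
  -- h10 : s12 * conj s11 + s22 * conj s12 = 0
  have hn12 : (‖s12‖ : ℝ)^2 + (‖s22‖)^2 = 1 := by
    have := congrArg Complex.re h22
    simpa [Complex.mul_conj, ← Complex.normSq_eq_norm_sq] using this
  have hpos : (0:ℝ) < ‖s12‖ ^ 2 := pow_pos (norm_pos_iff.mpr h12) 2
  have hlt : ‖s22‖ < 1 := by nlinarith [norm_nonneg s22]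
  have hden : (1 : ℂ) - (‖s22‖ : ℂ)^2 = s12 * (starRingEnd ℂ) s12 := by
    rw [Complex.mul_conj, ← Complex.sq_norm]
    have h' : (‖s12‖:ℝ)^2 = 1 - ‖s22‖^2 := by linarith
    rw [h']; push_cast; ring
  refine ⟨hlt, ?_, ?_⟩
  · rw [hden]
    have hc12 : (starRingEnd ℂ) s12 ≠ 0 := by simpa using h12
    field_simp
    have := congrArg (starRingEnd ℂ) h10
    simp only [map_add, map_mul, map_zero, Complex.conj_conj] at this
    linear_combination this
  · rw [norm_mul, div_eq_one_iff_eq (by nlinarith)]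
    rw [← hn12]; ring
end

section
/- Assume s12 ≠ 0. Then the set { s11 + s12²/(z − s22) : z ∈ ℂ, |z| = 1 } is exactly the unit circle { w ∈ ℂ : |w| = 1 }. (Note that s12 ≠ 0 together with unitarity forces |s22| < 1, so z − s22 ≠ 0 for every z on the unit circle.) -/
/-- For a unitary symmetric 2×2 matrix with `s12 ≠ 0`, the image of the unit circle
under `z ↦ s11 + s12^2 / (z - s22)` is exactly the unit circle. -/
theorem mobius_image_is_unit_circle (s11 s12 s21 s22 : ℂ)
    (hU : (!![s11, s12; s21, s22] : Matrix (Fin 2) (Fin 2) ℂ) *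
      (!![s11, s12; s21, s22] : Matrix (Fin 2) (Fin 2) ℂ).conjTranspose = 1)
    (hSym : s21 = s12) (h12 : s12 ≠ 0) :
    {w : ℂ | ∃ z : ℂ, ‖z‖ = 1 ∧ w = s11 + s12 ^ 2 / (z - s22)} =
    {w : ℂ | ‖w‖ = 1} := by
  subst hSym
  have h1 := congrFun (congrFun hU 0) 0
  have h2 := congrFun (congrFun hU 0) 1
  have h4 := congrFun (congrFun hU 1) 1
  simp [Matrix.mul_apply, Fin.sum_univ_two, Matrix.one_apply] at h1 h2 h4
  have h2c : (starRingEnd ℂ) s11 * s21 + (starRingEnd ℂ) s21 * s22 = 0 := by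
    have := congrArg (starRingEnd ℂ) h2
    simpa using this
  have hre1 : Complex.normSq s11 + Complex.normSq s21 = 1 := by
    have := h1
    rw [Complex.mul_conj, Complex.mul_conj] at this
    exact_mod_cast this
  have hre4 : Complex.normSq s21 + Complex.normSq s22 = 1 := by
    have := h4
    rw [Complex.mul_conj, Complex.mul_conj] at this
    exact_mod_cast this
  have hb : 0 < Complex.normSq s21 := Complex.normSq_pos.2 h12
  have hd1 : Complex.normSq s22 < 1 := by linarith
  have ha1 : Complex.normSq s11 < 1 := by linarith
  ext w
  simp only [Set.mem_setOf_eq]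
  constructor
  · rintro ⟨z, hz, rfl⟩
    have hz2 : z * (starRingEnd ℂ) z = 1 := by
      rw [Complex.mul_conj, Complex.normSq_eq_norm_sq, hz]; norm_num
    have hne : z - s22 ≠ 0 := by
      intro h
      have hzeq : z = s22 := sub_eq_zero.mp h
      rw [hzeq] at hz
      have : Complex.normSq s22 = 1 := by rw [Complex.normSq_eq_norm_sq, hz]; norm_num
      linarith
    have w_eq : s11 + s21 ^ 2 / (z - s22) =
        (s11 * z - (s11 * s22 - s21 ^ 2)) / (z - s22) := by
      field_simp
      ring
    have key : (s11 * z - (s11 * s22 - s21 ^ 2)) *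
        (starRingEnd ℂ) (s11 * z - (s11 * s22 - s21 ^ 2)) =
        (z - s22) * (starRingEnd ℂ) (z - s22) := by
      simp only [map_sub, map_mul, map_pow]
      linear_combination (s11 * (starRingEnd ℂ) s11 - 1) * hz2 + h1 - h4
        - z * ((starRingEnd ℂ) s22 * h1 - (starRingEnd ℂ) s21 * h2)
        - (starRingEnd ℂ) z * (s22 * h1 - s21 * h2c)
        + s22 * ((starRingEnd ℂ) s22 * h1 - (starRingEnd ℂ) s21 * h2)
        - s21 * ((starRingEnd ℂ) s22 * h2c - (starRingEnd ℂ) s21 * h4)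
        + h4
    have hnum : ‖s11 * z - (s11 * s22 - s21 ^ 2)‖ = ‖z - s22‖ := by
      have h' : Complex.normSq (s11 * z - (s11 * s22 - s21 ^ 2)) =
          Complex.normSq (z - s22) := by
        rw [Complex.mul_conj, Complex.mul_conj] at key
        exact_mod_cast key
      rw [Complex.norm_def, Complex.norm_def, h']
    rw [w_eq, norm_div, hnum, div_self (norm_ne_zero_iff.mpr hne)]
  · intro hw
    have hw2 : w * (starRingEnd ℂ) w = 1 := by
      rw [Complex.mul_conj, Complex.normSq_eq_norm_sq, hw]; norm_num
    have hwne : w - s11 ≠ 0 := by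
      intro h
      have hweq : w = s11 := sub_eq_zero.mp h
      rw [hweq] at hw
      have : Complex.normSq s11 = 1 := by rw [Complex.normSq_eq_norm_sq, hw]; norm_num
      linarith
    refine ⟨(s22 * w - (s11 * s22 - s21 ^ 2)) / (w - s11), ?_, ?_⟩
    · have key : (s22 * w - (s11 * s22 - s21 ^ 2)) *
          (starRingEnd ℂ) (s22 * w - (s11 * s22 - s21 ^ 2)) =
          (w - s11) * (starRingEnd ℂ) (w - s11) := by
        simp only [map_sub, map_mul, map_pow]
        linear_combination (s22 * (starRingEnd ℂ) s22 - 1) * hw2 + h4 - h1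
          - w * ((starRingEnd ℂ) s11 * h4 - (starRingEnd ℂ) s21 * h2c)
          - (starRingEnd ℂ) w * (s11 * h4 - s21 * h2)
          + s22 * ((starRingEnd ℂ) s22 * h1 - (starRingEnd ℂ) s21 * h2)
          - s21 * ((starRingEnd ℂ) s22 * h2c - (starRingEnd ℂ) s21 * h4)
          + h4
      have hnum : ‖s22 * w - (s11 * s22 - s21 ^ 2)‖ = ‖w - s11‖ := by
        have h' : Complex.normSq (s22 * w - (s11 * s22 - s21 ^ 2)) =
            Complex.normSq (w - s11) := by
          rw [Complex.mul_conj, Complex.mul_conj] at key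
          exact_mod_cast key
        rw [Complex.norm_def, Complex.norm_def, h']
      rw [norm_div, hnum, div_self (norm_ne_zero_iff.mpr hwne)]
    · have hzs : (s22 * w - (s11 * s22 - s21 ^ 2)) / (w - s11) - s22 =
          s21 ^ 2 / (w - s11) := by
        field_simp
        ring
      rw [hzs, div_div_eq_mul_div, mul_comm, mul_div_assoc,
        div_self (pow_ne_zero 2 h12), mul_one]
      ring
end

section
/- Assume s12 ≠ 0 and let γ > 0 be a real number. Define, for real L, R^asy(L) := s11 + s12²/(exp(−2iγL) − s22) (well defined since |s22| < 1). Then the set { L ∈ ℝ : L > 1 and R^asy(L) = −1 } is infinite; equivalently, the transmission quantity T^asy(L) := (1 − R^asy(L))/2 equals 1 for infinitely many L > 1. -/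
open Complex in
/-- For a unitary symmetric 2×2 matrix with `s12 ≠ 0` and `γ > 0`, the asymptotic
reflection coefficient `R^asy(L) = s11 + s12^2 / (exp(-2iγL) - s22)` equals `-1`
for infinitely many `L > 1`; equivalently, the transmission quantity
`T^asy(L) = (1 - R^asy(L))/2` equals `1` for infinitely many `L > 1`. -/
theorem perfectly_invisible_infinitely_often (s11 s12 s21 s22 : ℂ) (γ : ℝ)
    (hU : (!![s11, s12; s21, s22] : Matrix (Fin 2) (Fin 2) ℂ) *
      (!![s11, s12; s21, s22] : Matrix (Fin 2) (Fin 2) ℂ).conjTranspose = 1)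
    (hSym : s21 = s12) (h12 : s12 ≠ 0) (hγ : 0 < γ) :
    {L : ℝ | 1 < L ∧
      s11 + s12 ^ 2 / (Complex.exp (-(2 * Complex.I * (γ : ℂ) * (L : ℂ))) - s22) = -1}.Infinite ∧
    {L : ℝ | 1 < L ∧
      (1 - (s11 + s12 ^ 2 / (Complex.exp (-(2 * Complex.I * (γ : ℂ) * (L : ℂ))) - s22))) / 2
        = 1}.Infinite := by
  have h := fun i j => congrFun (congrFun hU i) j
  have h1 := h 0 0
  have h2 := h 0 1
  have h3 := h 1 0
  have h4 := h 1 1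
  simp [Matrix.mul_apply, Fin.sum_univ_two, Matrix.conjTranspose_apply, Matrix.one_apply,
    hSym] at h1 h2 h3 h4
  have ha : (1 : ℂ) + s11 ≠ 0 := by
    intro hcon
    have hs : s11 = -1 := by linear_combination hcon
    have h0 : s12 * (starRingEnd ℂ) s12 = 0 := by
      rw [hs] at h1; simp only [map_neg, map_one] at h1; linear_combination h1
    rw [Complex.mul_conj] at h0
    simp [Complex.normSq_eq_zero] at h0
    exact h12 h0
  have ha' : (1 : ℂ) + (starRingEnd ℂ) s11 ≠ 0 := by
    intro hcon
    apply ha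
    have := congrArg (starRingEnd ℂ) hcon
    simpa using this
  set d : ℂ := s11 * s22 - s12 ^ 2 with hd
  have hda : d * (starRingEnd ℂ) s11 = s22 := by
    linear_combination s22 * h1 - s12 * h3
  have hdc : d * (starRingEnd ℂ) s22 = s11 := by
    linear_combination s11 * h4 - s12 * h2
  have hdc' : s22 * (starRingEnd ℂ) d = (starRingEnd ℂ) s11 := by
    have := congrArg (starRingEnd ℂ) hdc
    simpa [map_mul, mul_comm] using this
  have hdd : d * (starRingEnd ℂ) d = 1 := by
    by_cases hc : s22 = 0
    · simp only [hc, map_zero, mul_zero, add_zero] at h2 h4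
      have hb' : (starRingEnd ℂ) s12 ≠ 0 := by simpa using h12
      have hA : s11 = 0 := (mul_eq_zero.1 h2).resolve_right hb'
      rw [hd, hA, hc]
      simp only [map_sub, map_mul, map_pow, map_zero]
      linear_combination (1 + s12 * (starRingEnd ℂ) s12) * h4
    · have key : d * (starRingEnd ℂ) d * s22 = 1 * s22 := by
        calc d * (starRingEnd ℂ) d * s22 = d * (s22 * (starRingEnd ℂ) d) := by ring
        _ = d * (starRingEnd ℂ) s11 := by rw [hdc']
        _ = s22 := hda
        _ = 1 * s22 := (one_mul s22).symm
      exact mul_right_cancel₀ hc key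
  have hcd : (s22 + d) * ((starRingEnd ℂ) s22 + (starRingEnd ℂ) d)
      = (1 + s11) * (1 + (starRingEnd ℂ) s11) := by
    linear_combination hdc + hdc' + hdd + h4 - h1
  -- the point on the unit circle
  set w : ℂ := s22 - s12 ^ 2 / (1 + s11) with hwdef
  have hw1 : w = (s22 + d) / (1 + s11) := by
    rw [hwdef, hd]; field_simp; ring
  have hwconj : w * (starRingEnd ℂ) w = 1 := by
    rw [hw1, map_div₀, map_add]
    rw [div_mul_div_comm, hcd]
    simp only [map_add, map_one]
    exact div_self (mul_ne_zero ha ha')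
  have habs : ‖w‖ = 1 := by
    have hnormSq : Complex.normSq w = 1 := by
      have := hwconj
      rw [Complex.mul_conj] at this
      exact_mod_cast this
    rw [Complex.norm_def, hnormSq, Real.sqrt_one]
  set θ : ℝ := Complex.arg w with hθ
  have hexp : Complex.exp ((θ : ℂ) * Complex.I) = w := by
    have := Complex.norm_mul_exp_arg_mul_I w
    rwa [habs, Complex.ofReal_one, one_mul] at this
  -- the family of lengths
  set N : ℕ := ⌈γ⌉₊ + 1 with hN
  set f : ℕ → ℝ := fun n => (2 * Real.pi * (n + N) - θ) / (2 * γ) with hf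
  have hπ3 := Real.pi_gt_three
  have hθπ : θ ≤ Real.pi := Complex.arg_le_pi w
  have hNγ : (γ : ℝ) + 1 ≤ N := by
    have := Nat.le_ceil γ
    push_cast [hN]
    linarith
  have hfexp : ∀ n : ℕ, Complex.exp (-(2 * Complex.I * (γ : ℂ) * ((f n : ℝ) : ℂ))) = w := by
    intro n
    set k : ℤ := -((n : ℤ) + (N : ℤ)) with hk
    have harg : -(2 * Complex.I * (γ : ℂ) * ((f n : ℝ) : ℂ))
        = (θ : ℂ) * Complex.I + (k : ℂ) * (2 * (Real.pi : ℂ) * Complex.I) := by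
      rw [hf, hk]
      have hγ' : (γ : ℂ) ≠ 0 := by exact_mod_cast hγ.ne'
      push_cast
      field_simp
      ring
    rw [harg, Complex.exp_add, Complex.exp_int_mul_two_pi_mul_I, mul_one, hexp]
  have hmem : ∀ n : ℕ, 1 < f n ∧
      s11 + s12 ^ 2 / (Complex.exp (-(2 * Complex.I * (γ : ℂ) * ((f n : ℝ) : ℂ))) - s22) = -1 := by
    intro n
    constructor
    · rw [hf]
      have hn0 : (0 : ℝ) ≤ n := Nat.cast_nonneg n
      rw [lt_div_iff₀ (by positivity)]
      nlinarith [mul_nonneg Real.pi_pos.le hn0, mul_le_mul_of_nonneg_left hNγ Real.pi_pos.le,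
        mul_pos (by linarith : (0:ℝ) < Real.pi - 1) hγ]
    · rw [hfexp n, hwdef]
      have hden : (s22 - s12 ^ 2 / (1 + s11)) - s22 = -(s12 ^ 2 / (1 + s11)) := by ring
      have hdd2 : s12 ^ 2 / (s12 ^ 2 / (1 + s11)) = 1 + s11 := by
        field_simp
      rw [hden, div_neg, hdd2]
      ring
  have hinj : Function.Injective f := by
    have hmono : StrictMono f := by
      intro m n hmn
      rw [hf]
      simp only
      rw [div_lt_div_iff_of_pos_right (by positivity)]
      have : (m : ℝ) < n := by exact_mod_cast hmn
      nlinarith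
    exact hmono.injective
  have hS1 : {L : ℝ | 1 < L ∧
      s11 + s12 ^ 2 / (Complex.exp (-(2 * Complex.I * (γ : ℂ) * (L : ℂ))) - s22) = -1}.Infinite :=
    Set.infinite_of_injective_forall_mem hinj hmem
  refine ⟨hS1, hS1.mono ?_⟩
  intro L hL
  exact ⟨hL.1, by rw [hL.2]; norm_num⟩
end

section
/- Assume s12 ≠ 0. Then the set { (1 − (s11 + s12²/(z − s22)))/2 : z ∈ ℂ, |z| = 1 } is exactly the circle { w ∈ ℂ : |w − 1/2| = 1/2 } of radius 1/2 centered at 1/2. -/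
open ComplexConjugate

private lemma abs_eq_of_mul_conj {a b : ℂ} (h : a * conj a = b * conj b) :
    ‖a‖ = ‖b‖ := by
  have h1 : ((Complex.normSq a : ℂ)) = (Complex.normSq b : ℂ) := by
    rw [← Complex.mul_conj, ← Complex.mul_conj]; exact h
  have h2 : Complex.normSq a = Complex.normSq b := by exact_mod_cast h1
  simp [Complex.norm_def, h2]

/-- For a unitary symmetric 2×2 matrix with `s12 ≠ 0`, the image of the unit circle
under `z ↦ (1 - (s11 + s12^2 / (z - s22))) / 2` is exactly the circle of radius `1/2`
centered at `1/2`. -/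
theorem transmission_runs_on_circle (s11 s12 s21 s22 : ℂ)
    (hU : (!![s11, s12; s21, s22] : Matrix (Fin 2) (Fin 2) ℂ) *
      (!![s11, s12; s21, s22] : Matrix (Fin 2) (Fin 2) ℂ).conjTranspose = 1)
    (hSym : s21 = s12) (h12 : s12 ≠ 0) :
    {w : ℂ | ∃ z : ℂ, ‖z‖ = 1 ∧ w = (1 - (s11 + s12 ^ 2 / (z - s22))) / 2} =
    {w : ℂ | ‖w - 1 / 2‖ = 1 / 2} := by
  rw [hSym] at hU
  have hA : s11 * conj s11 + s12 * conj s12 = 1 := by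
    have := congrFun (congrFun hU 0) 0
    simpa [Matrix.mul_apply, Fin.sum_univ_succ, Matrix.conjTranspose_apply,
      Matrix.one_apply] using this
  have hB : s11 * conj s12 + s12 * conj s22 = 0 := by
    have := congrFun (congrFun hU 0) 1
    simpa [Matrix.mul_apply, Fin.sum_univ_succ, Matrix.conjTranspose_apply,
      Matrix.one_apply] using this
  have hC : s12 * conj s12 + s22 * conj s22 = 1 := by
    have := congrFun (congrFun hU 1) 1
    simpa [Matrix.mul_apply, Fin.sum_univ_succ, Matrix.conjTranspose_apply,
      Matrix.one_apply] using this
  have hB' : conj s11 * s12 + conj s12 * s22 = 0 := by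
    have := congrArg conj hB
    simpa [mul_comm] using this
  -- key identities
  have key1 : s11 * (conj s11 * conj s22 - conj s12 ^ 2) = conj s22 := by
    linear_combination conj s22 * hA - conj s12 * hB
  have key1' : conj s11 * (s11 * s22 - s12 ^ 2) = s22 := by
    linear_combination s22 * hA - s12 * hB'
  have key2 : s22 * (conj s11 * conj s22 - conj s12 ^ 2) = conj s11 := by
    linear_combination conj s11 * hC - conj s12 * hB'
  have key2' : conj s22 * (s11 * s22 - s12 ^ 2) = s11 := by
    linear_combination s11 * hC - s12 * hB
  have key3 : s12 * (conj s11 * conj s22 - conj s12 ^ 2) = - conj s12 := by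
    linear_combination conj s11 * hB - conj s12 * hA
  have hdd : (s11 * s22 - s12 ^ 2) * (conj s11 * conj s22 - conj s12 ^ 2) = 1 := by
    linear_combination s22 * key1 - s12 * key3 + hC
  -- norm bounds
  have hn12 : 0 < Complex.normSq s12 := Complex.normSq_pos.mpr h12
  have hAr : Complex.normSq s11 + Complex.normSq s12 = 1 := by
    have h1 : ((Complex.normSq s11 + Complex.normSq s12 : ℝ) : ℂ) = 1 := by
      push_cast
      rw [← Complex.mul_conj, ← Complex.mul_conj]; exact hA
    exact_mod_cast h1
  have hCr : Complex.normSq s12 + Complex.normSq s22 = 1 := by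
    have h1 : ((Complex.normSq s12 + Complex.normSq s22 : ℝ) : ℂ) = 1 := by
      push_cast
      rw [← Complex.mul_conj, ← Complex.mul_conj]; exact hC
    exact_mod_cast h1
  have habs11 : ‖s11‖ < 1 := by
    nlinarith [Complex.sq_norm s11, norm_nonneg s11]
  have habs22 : ‖s22‖ < 1 := by
    nlinarith [Complex.sq_norm s22, norm_nonneg s22]
  ext w
  simp only [Set.mem_setOf_eq]
  constructor
  · rintro ⟨z, hz, rfl⟩
    have hz1 : z * conj z = 1 := by
      rw [Complex.mul_conj]
      norm_cast
      rw [Complex.normSq_eq_norm_sq, hz]; norm_num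
    have hzs : z - s22 ≠ 0 := by
      intro h
      rw [sub_eq_zero] at h
      rw [h] at hz
      rw [hz] at habs22
      exact lt_irrefl 1 habs22
    have hE : (s11 * z - (s11 * s22 - s12 ^ 2)) *
        (conj s11 * conj z - (conj s11 * conj s22 - conj s12 ^ 2)) =
        (z - s22) * (conj z - conj s22) := by
      linear_combination (s11 * conj s11 - 1) * hz1 - z * key1 - conj z * key1' + hdd + hA - hC
    have habsE : ‖s11 * z - (s11 * s22 - s12 ^ 2)‖ = ‖z - s22‖ := by
      apply abs_eq_of_mul_conj
      simpa [map_sub, map_mul, map_pow] using hE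
    have hrw : (1 - (s11 + s12 ^ 2 / (z - s22))) / 2 - 1 / 2 =
        -((s11 * z - (s11 * s22 - s12 ^ 2)) / (z - s22)) / 2 := by
      field_simp
      ring
    rw [hrw]
    rw [norm_div, norm_neg, norm_div, habsE, div_self (norm_ne_zero_iff.mpr hzs)]
    simp
  · intro hw
    set u : ℂ := 1 - 2 * w with hu_def
    have hu : ‖u‖ = 1 := by
      have : u = -2 * (w - 1 / 2) := by rw [hu_def]; ring
      rw [this, norm_mul, hw]
      norm_num
    have hu1 : u * conj u = 1 := by
      rw [Complex.mul_conj]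
      norm_cast
      rw [Complex.normSq_eq_norm_sq, hu]; norm_num
    have hus : u - s11 ≠ 0 := by
      intro h
      rw [sub_eq_zero] at h
      rw [h] at hu
      rw [hu] at habs11
      exact lt_irrefl 1 habs11
    refine ⟨s22 + s12 ^ 2 / (u - s11), ?_, ?_⟩
    · have hE : (s22 * u - (s11 * s22 - s12 ^ 2)) *
          (conj s22 * conj u - (conj s11 * conj s22 - conj s12 ^ 2)) =
          (u - s11) * (conj u - conj s11) := by
        linear_combination (s22 * conj s22 - 1) * hu1 - u * key2 - conj u * key2' + hdd + hC - hA
      have habsE : ‖s22 * u - (s11 * s22 - s12 ^ 2)‖ = ‖u - s11‖ := by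
        apply abs_eq_of_mul_conj
        simpa [map_sub, map_mul, map_pow] using hE
      have hrw : s22 + s12 ^ 2 / (u - s11) = (s22 * u - (s11 * s22 - s12 ^ 2)) / (u - s11) := by
        field_simp
        ring
      rw [hrw, norm_div, habsE, div_self (norm_ne_zero_iff.mpr hus)]
    · have hzz : s22 + s12 ^ 2 / (u - s11) - s22 = s12 ^ 2 / (u - s11) := by ring
      have hfrac : s12 ^ 2 / (s12 ^ 2 / (u - s11)) = u - s11 := by
        field_simp
      rw [hzz, hfrac, hu_def]
      ring
end

section
/- Assume s12 ≠ 0 and let γ > 0 be a real number. Define, for real L, R^asy(L) := s11 + s12²/(exp(−2iγL) − s22) (well defined since |s22| < 1). Then the set { L ∈ ℝ : L > 1 and R^asy(L) = 1 } is infinite; equivalently, the transmission quantity T^asy(L) := (1 − R^asy(L))/2 equals 0 (perfect reflection) for infinitely many L > 1. -/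
open Complex Real

/-- For a unitary symmetric 2×2 matrix with `s12 ≠ 0` and `γ > 0`, the asymptotic
reflection coefficient `R^asy(L) = s11 + s12^2 / (exp(-2iγL) - s22)` equals `1`
for infinitely many `L > 1`; equivalently, the transmission quantity
`T^asy(L) = (1 - R^asy(L))/2` equals `0` (perfect reflection) for infinitely many `L > 1`. -/
theorem perfect_reflection_infinitely_often (s11 s12 s21 s22 : ℂ) (γ : ℝ)
    (hU : (!![s11, s12; s21, s22] : Matrix (Fin 2) (Fin 2) ℂ) *
      (!![s11, s12; s21, s22] : Matrix (Fin 2) (Fin 2) ℂ).conjTranspose = 1)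
    (hSym : s21 = s12) (h12 : s12 ≠ 0) (hγ : 0 < γ) :
    {L : ℝ | 1 < L ∧
      s11 + s12 ^ 2 / (Complex.exp (-(2 * Complex.I * (γ : ℂ) * (L : ℂ))) - s22) = 1}.Infinite ∧
    {L : ℝ | 1 < L ∧
      (1 - (s11 + s12 ^ 2 / (Complex.exp (-(2 * Complex.I * (γ : ℂ) * (L : ℂ))) - s22))) / 2
        = 0}.Infinite := by
  rw [hSym] at hU
  -- extract the unitarity relations
  have h00 : s11 * (starRingEnd ℂ) s11 + s12 * (starRingEnd ℂ) s12 = 1 := by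
    have := congrFun (congrFun hU 0) 0
    simpa [Matrix.mul_apply, Fin.sum_univ_two, Matrix.conjTranspose_apply,
      Matrix.one_apply] using this
  have h01 : s11 * (starRingEnd ℂ) s12 + s12 * (starRingEnd ℂ) s22 = 0 := by
    have := congrFun (congrFun hU 0) 1
    simpa [Matrix.mul_apply, Fin.sum_univ_two, Matrix.conjTranspose_apply,
      Matrix.one_apply] using this
  have h11 : s12 * (starRingEnd ℂ) s12 + s22 * (starRingEnd ℂ) s22 = 1 := by
    have := congrFun (congrFun hU 1) 1
    simpa [Matrix.mul_apply, Fin.sum_univ_two, Matrix.conjTranspose_apply,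
      Matrix.one_apply] using this
  set Δ : ℂ := s11 * s22 - s12 * s12 with hΔ
  -- determinant relation
  have hdet : Δ * (starRingEnd ℂ) Δ = 1 := by
    have := congrArg Matrix.det hU
    rw [Matrix.det_mul, Matrix.det_conjTranspose, Matrix.det_one] at this
    simpa [Matrix.det_fin_two_of, hΔ, Matrix.star_eq_conjTranspose] using this
  -- s11 ≠ 1
  have hden1 : (1 : ℂ) - s11 ≠ 0 := by
    intro h
    have hs11 : s11 = 1 := by linear_combination -h
    apply h12
    rw [hs11, map_one, mul_one] at h00
    have h0 : s12 * (starRingEnd ℂ) s12 = 0 := by linear_combination h00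
    rw [Complex.mul_conj] at h0
    exact Complex.normSq_eq_zero.mp (by exact_mod_cast h0)
  -- key relation : conj s22 * Δ = s11
  have key : (starRingEnd ℂ) s22 * Δ = s11 := by
    rw [hΔ]; linear_combination s11 * h11 - s12 * h01
  have key' : s22 * (starRingEnd ℂ) Δ = (starRingEnd ℂ) s11 := by
    have := congrArg (starRingEnd ℂ) key
    simpa using this
  have hs22 : s22 = (starRingEnd ℂ) s11 * Δ := by
    linear_combination Δ * key' - s22 * hdet
  -- the target point on the unit circle
  set w : ℂ := s22 + s12 ^ 2 / (1 - s11) with hw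
  have hwmul : w * (1 - s11) = -Δ * (starRingEnd ℂ) (1 - s11) := by
    have e1 : s12 ^ 2 / (1 - s11) * (1 - s11) = s12 ^ 2 := div_mul_cancel₀ _ hden1
    rw [hw, add_mul, e1]
    simp only [map_sub, map_one]
    linear_combination hs22 + hΔ
  have habsΔ : ‖Δ‖ = 1 := by
    have h := congrArg (norm : ℂ → ℝ) hdet
    simp only [norm_mul, Complex.norm_conj, norm_one] at h
    nlinarith [norm_nonneg Δ]
  have habsden : ‖1 - s11‖ ≠ 0 := by
    exact norm_ne_zero_iff.mpr hden1
  have habsw : ‖w‖ = 1 := by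
    have h := congrArg (norm : ℂ → ℝ) hwmul
    rw [norm_mul, norm_mul, norm_neg, Complex.norm_conj, habsΔ, one_mul] at h
    exact mul_right_cancel₀ habsden (by rw [h, one_mul])
  -- w = exp(θ I)
  set θ : ℝ := Complex.arg w with hθ
  have hwexp : Complex.exp (θ * Complex.I) = w := by
    have := Complex.norm_mul_exp_arg_mul_I w
    rwa [habsw, Complex.ofReal_one, one_mul] at this
  have hws22 : w - s22 = s12 ^ 2 / (1 - s11) := by rw [hw]; ring
  -- the reflection value at w equals 1
  have hR : s11 + s12 ^ 2 / (w - s22) = 1 := by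
    rw [hws22, div_div_eq_mul_div, mul_comm, mul_div_assoc,
      div_self (pow_ne_zero 2 h12), mul_one]
    ring
  -- the family of lengths
  set M : ℕ := ⌈(2 * γ + |θ|) / (2 * π)⌉₊ + 1 with hM
  have hπ := Real.pi_pos
  have hMbig : 2 * γ + |θ| < 2 * π * M := by
    have h1 : (2 * γ + |θ|) / (2 * π) ≤ (⌈(2 * γ + |θ|) / (2 * π)⌉₊ : ℝ) :=
      Nat.le_ceil _
    have h2 : ((⌈(2 * γ + |θ|) / (2 * π)⌉₊ : ℕ) : ℝ) < M := by
      rw [hM]; push_cast; linarith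
    have h3 := h1.trans_lt h2
    calc 2 * γ + |θ| = (2 * γ + |θ|) / (2 * π) * (2 * π) := by field_simp
    _ < (M : ℝ) * (2 * π) := by
        apply mul_lt_mul_of_pos_right h3 (by linarith)
    _ = 2 * π * M := by ring
  set f : ℕ → ℝ := fun k => (2 * π * (k + M) - θ) / (2 * γ) with hf
  have hfmem : ∀ k : ℕ, 1 < f k ∧
      s11 + s12 ^ 2 / (Complex.exp (-(2 * Complex.I * (γ : ℂ) * ((f k : ℝ) : ℂ))) - s22) = 1 := by
    intro k
    constructor
    · show 1 < (2 * π * (k + M) - θ) / (2 * γ)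
      rw [lt_div_iff₀ (by linarith)]
      nlinarith [le_abs_self θ, (Nat.cast_nonneg k : (0:ℝ) ≤ k), hπ, hMbig]
    · have hexp : Complex.exp (-(2 * Complex.I * (γ : ℂ) * ((f k : ℝ) : ℂ))) = w := by
        have harg : -(2 * Complex.I * (γ : ℂ) * ((f k : ℝ) : ℂ)) =
            (θ : ℂ) * Complex.I + ((-(k + M) : ℤ) : ℂ) * (2 * (π : ℂ) * Complex.I) := by
          show -(2 * Complex.I * (γ : ℂ) * (((2 * π * (k + M) - θ) / (2 * γ) : ℝ) : ℂ)) = _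
          have hγc : ((γ : ℂ)) ≠ 0 := by exact_mod_cast hγ.ne'
          push_cast
          field_simp
          ring
        rw [harg, Complex.exp_add, hwexp, Complex.exp_int_mul_two_pi_mul_I, mul_one]
      rw [hexp]
      exact hR
  have hinj : Function.Injective f := by
    have hmono : StrictMono f := by
      intro a b hab
      have hcast : (a : ℝ) < b := by exact_mod_cast hab
      show (2 * π * (a + M) - θ) / (2 * γ) < (2 * π * (b + M) - θ) / (2 * γ)
      rw [div_lt_div_iff₀ (by linarith) (by linarith)]
      nlinarith [mul_pos hπ hγ]
    exact hmono.injective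
  have hset1 : {L : ℝ | 1 < L ∧
      s11 + s12 ^ 2 / (Complex.exp (-(2 * Complex.I * (γ : ℂ) * (L : ℂ))) - s22) = 1}.Infinite :=
    Set.infinite_of_injective_forall_mem (f := f) hinj (fun k => hfmem k)
  refine ⟨hset1, ?_⟩
  have hsame : {L : ℝ | 1 < L ∧
      (1 - (s11 + s12 ^ 2 / (Complex.exp (-(2 * Complex.I * (γ : ℂ) * (L : ℂ))) - s22))) / 2
        = 0} = {L : ℝ | 1 < L ∧
      s11 + s12 ^ 2 / (Complex.exp (-(2 * Complex.I * (γ : ℂ) * (L : ℂ))) - s22) = 1} := by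
    ext L
    simp only [Set.mem_setOf_eq, div_eq_zero_iff, sub_eq_zero]
    constructor
    · rintro ⟨hL, h | h⟩
      · exact ⟨hL, h.symm⟩
      · norm_num at h
    · rintro ⟨hL, h⟩
      exact ⟨hL, Or.inl h.symm⟩
  rw [hsame]
  exact hset1
end

section
/- Assume s12 ≠ 0 and let γ > 0 be a real number. Then the set { s11 + s12²/(exp(−2iγL) − s22) : L ∈ ℝ, L > 1 } is exactly the unit circle { w ∈ ℂ : |w| = 1 }. -/
open Complex

private lemma abs_one_iff' (z : ℂ) : ‖z‖ = 1 ↔ z * (starRingEnd ℂ) z = 1 := by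
  rw [Complex.mul_conj]
  constructor
  · intro h
    have : Complex.normSq z = 1 := by rw [← Complex.sq_norm, h]; norm_num
    exact_mod_cast congrArg (fun x : ℝ => (x : ℂ)) this
  · intro h
    have : Complex.normSq z = 1 := by exact_mod_cast h
    rw [Complex.norm_def, this, Real.sqrt_one]

/-- For a unitary symmetric 2×2 matrix with `s12 ≠ 0` and `γ > 0`, the set
`{ s11 + s12^2 / (exp(-2iγL) - s22) : L > 1 }` is exactly the unit circle. -/
theorem asymptotic_reflection_runs_on_unit_circle (s11 s12 s21 s22 : ℂ) (γ : ℝ)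
    (hU : (!![s11, s12; s21, s22] : Matrix (Fin 2) (Fin 2) ℂ) *
      (!![s11, s12; s21, s22] : Matrix (Fin 2) (Fin 2) ℂ).conjTranspose = 1)
    (hSym : s21 = s12) (h12 : s12 ≠ 0) (hγ : 0 < γ) :
    {w : ℂ | ∃ L : ℝ, 1 < L ∧
      w = s11 + s12 ^ 2 / (Complex.exp (-(2 * Complex.I * (γ : ℂ) * (L : ℂ))) - s22)} =
    {w : ℂ | ‖w‖ = 1} := by
  have h00 := congrFun (congrFun hU 0) 0
  have h01 := congrFun (congrFun hU 0) 1
  have h10 := congrFun (congrFun hU 1) 0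
  have h11 := congrFun (congrFun hU 1) 1
  simp [Matrix.mul_apply, Fin.sum_univ_two, Matrix.conjTranspose_apply,
    Matrix.one_apply, hSym] at h00 h01 h10 h11
  -- key algebraic identities
  have keyA : ((starRingEnd ℂ) s11 * (starRingEnd ℂ) s22 - (starRingEnd ℂ) s12 ^ 2) * s11
      = (starRingEnd ℂ) s22 := by
    linear_combination (starRingEnd ℂ) s22 * h00 - (starRingEnd ℂ) s12 * h01
  have keyB : (s11 * s22 - s12 ^ 2) * (starRingEnd ℂ) s11 = s22 := by
    linear_combination s22 * h00 - s12 * h10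
  have keyD : (s11 * s22 - s12 ^ 2) *
      ((starRingEnd ℂ) s11 * (starRingEnd ℂ) s22 - (starRingEnd ℂ) s12 ^ 2) = 1 := by
    linear_combination (s22 * (starRingEnd ℂ) s22) * h00 + (s12 * (starRingEnd ℂ) s12 + 1) * h11
      - ((starRingEnd ℂ) s12 * s22) * h01 - (s12 * (starRingEnd ℂ) s22) * h10
  have keyC1 : ((starRingEnd ℂ) s11 * (starRingEnd ℂ) s22 - (starRingEnd ℂ) s12 ^ 2) * s22
      = (starRingEnd ℂ) s11 := by
    linear_combination (starRingEnd ℂ) s11 * keyD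
      - ((starRingEnd ℂ) s11 * (starRingEnd ℂ) s22 - (starRingEnd ℂ) s12 ^ 2) * keyB
  have keyC2 : (s11 * s22 - s12 ^ 2) * (starRingEnd ℂ) s22 = s11 := by
    linear_combination s11 * keyD - (s11 * s22 - s12 ^ 2) * keyA
  -- norm facts
  have hns : Complex.normSq s11 + Complex.normSq s12 = 1 := by
    have := h00; rw [Complex.mul_conj, Complex.mul_conj] at this; exact_mod_cast this
  have hns' : Complex.normSq s12 + Complex.normSq s22 = 1 := by
    have := h11; rw [Complex.mul_conj, Complex.mul_conj] at this; exact_mod_cast this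
  have h12pos : 0 < Complex.normSq s12 := Complex.normSq_pos.2 h12
  have habs11 : ‖s11‖ < 1 := by
    nlinarith [Complex.sq_norm s11, norm_nonneg s11]
  have habs22 : ‖s22‖ < 1 := by
    nlinarith [Complex.sq_norm s22, norm_nonneg s22]
  ext w
  simp only [Set.mem_setOf_eq]
  constructor
  · rintro ⟨L, hL, rfl⟩
    set e := Complex.exp (-(2 * Complex.I * (γ : ℂ) * (L : ℂ))) with he_def
    have habse : ‖e‖ = 1 := by
      rw [he_def, Complex.norm_exp]
      norm_num
    have he : e * (starRingEnd ℂ) e = 1 := (abs_one_iff' e).1 habse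
    have hd : e - s22 ≠ 0 := by
      intro h
      rw [sub_eq_zero] at h
      rw [h] at habse
      linarith
    have hdc : (starRingEnd ℂ) e - (starRingEnd ℂ) s22 ≠ 0 := by
      intro h
      rw [sub_eq_zero] at h
      exact hd (sub_eq_zero.2 ((starRingEnd ℂ).injective h))
    rw [abs_one_iff']
    simp only [map_add, map_div₀, map_pow, map_sub]
    field_simp
    linear_combination (s11 * (starRingEnd ℂ) s11 - 1) * he - e * keyA
      - (starRingEnd ℂ) e * keyB + keyD + h00 - h11
  · intro hw
    have hw1 : w * (starRingEnd ℂ) w = 1 := (abs_one_iff' w).1 hw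
    have hwne : w - s11 ≠ 0 := by
      intro h
      rw [sub_eq_zero] at h
      rw [h] at hw
      linarith
    have hwnec : (starRingEnd ℂ) w - (starRingEnd ℂ) s11 ≠ 0 := by
      intro h
      rw [sub_eq_zero] at h
      exact hwne (sub_eq_zero.2 ((starRingEnd ℂ).injective h))
    set z := (s22 * w - (s11 * s22 - s12 ^ 2)) / (w - s11) with hz_def
    have hzc : (starRingEnd ℂ) z = ((starRingEnd ℂ) s22 * (starRingEnd ℂ) w
        - ((starRingEnd ℂ) s11 * (starRingEnd ℂ) s22 - (starRingEnd ℂ) s12 ^ 2))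
        / ((starRingEnd ℂ) w - (starRingEnd ℂ) s11) := by
      rw [hz_def]
      simp only [map_div₀, map_sub, map_mul, map_pow]
    have hz1 : z * (starRingEnd ℂ) z = 1 := by
      rw [hzc, hz_def]
      field_simp
      linear_combination (s22 * (starRingEnd ℂ) s22 - 1) * hw1 - w * keyC1
        - (starRingEnd ℂ) w * keyC2 + keyD + h11 - h00
    have habsz : ‖z‖ = 1 := (abs_one_iff' z).2 hz1
    have hzne : z - s22 ≠ 0 := by
      intro h
      rw [sub_eq_zero] at h
      rw [h] at habsz
      linarith
    have hz_eq : z * (w - s11) = s22 * w - (s11 * s22 - s12 ^ 2) := by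
      rw [hz_def]; field_simp
    obtain ⟨n, hn⟩ := exists_nat_gt ((2 * γ + z.arg) / (2 * Real.pi))
    have hpi := Real.pi_pos
    refine ⟨(2 * Real.pi * n - z.arg) / (2 * γ), ?_, ?_⟩
    · rw [lt_div_iff₀ (by linarith)]
      have := (div_lt_iff₀ (by linarith : (0:ℝ) < 2 * Real.pi)).1 hn
      linarith
    · have hz_exp : Complex.exp ((z.arg : ℂ) * Complex.I) = z := by
        have := Complex.norm_mul_exp_arg_mul_I z
        rwa [habsz, Complex.ofReal_one, one_mul] at this
      have hper : Complex.exp (-(n : ℂ) * (2 * Real.pi * Complex.I)) = 1 := by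
        have := Complex.exp_int_mul_two_pi_mul_I (-(n : ℤ))
        push_cast at this
        exact this
      have hL2 : 2 * γ * ((2 * Real.pi * n - z.arg) / (2 * γ)) = 2 * Real.pi * n - z.arg := by
        field_simp
      have e1 : -(2 * Complex.I * (γ : ℂ) * (((2 * Real.pi * n - z.arg) / (2 * γ) : ℝ) : ℂ))
          = (z.arg : ℂ) * Complex.I + (-(n : ℂ)) * (2 * Real.pi * Complex.I) := by
        have := congrArg (fun x : ℝ => (x : ℂ)) hL2
        push_cast at this ⊢
        linear_combination (-Complex.I) * this
      rw [e1, Complex.exp_add, hz_exp, hper, mul_one]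
      have hfin : s12 ^ 2 / (z - s22) = w - s11 := by
        rw [div_eq_iff hzne]
        linear_combination -hz_eq
      rw [hfin]
      ring
end

section
/- Assume λ ≠ 0 and s44 = −1. Then s14 = 0, s11 = 1, and s12 = s13 = s24 = s34 = s42 = s43 = 0 (hence by symmetry also s21 = s31 = s41 = 0). -/
/-- For a 4×4 unitary symmetric matrix `S` (entries `S i j`, with `S 0 0 = s11`, …,
`S 3 3 = s44`) satisfying the relations `s11 + λ·s41 = 1`, `s12 + λ·s42 = 0`,
`s13 + λ·s43 = 0`, `s14 + λ·s44 = -λ` with `λ ≠ 0`: if `s44 = -1` then `s14 = 0`,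
`s11 = 1` and `s12 = s13 = s24 = s34 = s42 = s43 = 0`
(hence by symmetry also `s21 = s31 = s41 = 0`). -/
theorem exceptional_case_entries_vanish (S : Matrix (Fin 4) (Fin 4) ℂ) (l : ℂ)
    (hU : S * S.conjTranspose = 1)
    (hSym : ∀ i j, S j i = S i j)
    (h1 : S 0 0 + l * S 3 0 = 1)
    (h2 : S 0 1 + l * S 3 1 = 0)
    (h3 : S 0 2 + l * S 3 2 = 0)
    (h4 : S 0 3 + l * S 3 3 = -l)
    (hl : l ≠ 0) (h44 : S 3 3 = -1) :
    S 0 3 = 0 ∧ S 0 0 = 1 ∧ S 0 1 = 0 ∧ S 0 2 = 0 ∧ S 1 3 = 0 ∧ S 2 3 = 0 ∧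
    S 3 1 = 0 ∧ S 3 2 = 0 ∧ S 1 0 = 0 ∧ S 2 0 = 0 ∧ S 3 0 = 0 := by
  have hd := congrArg (fun M => M 3 3) hU
  simp only [Matrix.mul_apply, Matrix.conjTranspose_apply, Fin.sum_univ_four,
    Matrix.one_apply_eq, h44] at hd
  simp only [RCLike.star_def] at hd
  rw [Complex.mul_conj, Complex.mul_conj, Complex.mul_conj] at hd
  have hd' : (Complex.normSq (S 3 0) : ℂ) + Complex.normSq (S 3 1)
      + Complex.normSq (S 3 2) = 0 := by
    have : (-1 : ℂ) * (starRingEnd ℂ) (-1 : ℂ) = 1 := by norm_num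
    rw [this] at hd
    linear_combination hd
  have hre : Complex.normSq (S 3 0) + Complex.normSq (S 3 1)
      + Complex.normSq (S 3 2) = 0 := by
    exact_mod_cast hd'
  have h30 : S 3 0 = 0 := by
    have := Complex.normSq_nonneg (S 3 0)
    have := Complex.normSq_nonneg (S 3 1)
    have := Complex.normSq_nonneg (S 3 2)
    have : Complex.normSq (S 3 0) = 0 := by linarith
    exact Complex.normSq_eq_zero.mp this
  have h31 : S 3 1 = 0 := by
    have := Complex.normSq_nonneg (S 3 0)
    have := Complex.normSq_nonneg (S 3 1)
    have := Complex.normSq_nonneg (S 3 2)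
    have : Complex.normSq (S 3 1) = 0 := by linarith
    exact Complex.normSq_eq_zero.mp this
  have h32 : S 3 2 = 0 := by
    have := Complex.normSq_nonneg (S 3 0)
    have := Complex.normSq_nonneg (S 3 1)
    have := Complex.normSq_nonneg (S 3 2)
    have : Complex.normSq (S 3 2) = 0 := by linarith
    exact Complex.normSq_eq_zero.mp this
  have h14 : S 0 3 = 0 := by rw [h44] at h4; linear_combination h4
  have h11 : S 0 0 = 1 := by rw [h30] at h1; linear_combination h1
  have h12 : S 0 1 = 0 := by rw [h31] at h2; linear_combination h2
  have h13 : S 0 2 = 0 := by rw [h32] at h3; linear_combination h3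
  refine ⟨h14, h11, h12, h13, ?_, ?_, h31, h32, ?_, ?_, h30⟩
  · exact (hSym 3 1).trans h31
  · exact (hSym 3 2).trans h32
  · exact (hSym 0 1).trans h12
  · exact (hSym 0 2).trans h13
end

section
/- Assume s14 ≠ 0. Define b := (1/s14)·(2·s24·s13·s32 − s23·s14·s32 − s12·s42·s13·s34/s14) and d := s23 − s24·s13/s14. Then b = −d². -/
/-- For a 4×4 symmetric matrix `S` (entries `S i j`, with `S 0 0 = s11`, …,
`S 3 3 = s44`) satisfying the relations `s11 + λ·s41 = 1`, `s12 + λ·s42 = 0`,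
`s13 + λ·s43 = 0`, `s14 + λ·s44 = -λ`, and `s14 ≠ 0`: with
`b := (1/s14)·(2·s24·s13·s32 - s23·s14·s32 - s12·s42·s13·s34/s14)` and
`d := s23 - s24·s13/s14`, one has `b = -d^2`. -/
theorem b_eq_neg_d_sq (S : Matrix (Fin 4) (Fin 4) ℂ) (l : ℂ)
    (hSym : ∀ i j, S j i = S i j)
    (h1 : S 0 0 + l * S 3 0 = 1)
    (h2 : S 0 1 + l * S 3 1 = 0)
    (h3 : S 0 2 + l * S 3 2 = 0)
    (h4 : S 0 3 + l * S 3 3 = -l)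
    (h14 : S 0 3 ≠ 0) :
    (1 / S 0 3) * (2 * S 1 3 * S 0 2 * S 2 1 - S 1 2 * S 0 3 * S 2 1
      - S 0 1 * S 3 1 * S 0 2 * S 2 3 / S 0 3) =
    -(S 1 2 - S 1 3 * S 0 2 / S 0 3) ^ 2 := by
  have e1 : S 0 1 = -l * S 1 3 := by
    rw [hSym 1 3] at h2; linear_combination h2
  have e2 : S 0 2 = -l * S 2 3 := by
    rw [hSym 2 3] at h3; linear_combination h3
  rw [hSym 1 2, hSym 1 3, e1, e2]
  field_simp
  ring
end

section
/- The following identity holds: 2·Re( s14 · conj(s13) · s34 · conj(s44) ) = −|s13|² + |s34|²·|s14|² + |s13|²·|s44|². -/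
/-- For a 4×4 symmetric matrix `S` (entries `S i j`, with `S 0 0 = s11`, …,
`S 3 3 = s44`) satisfying the relations `s11 + λ·s41 = 1`, `s12 + λ·s42 = 0`,
`s13 + λ·s43 = 0`, `s14 + λ·s44 = -λ`, one has
`2·Re(s14·conj(s13)·s34·conj(s44)) = -|s13|² + |s34|²·|s14|² + |s13|²·|s44|²`. -/
theorem real_part_identity (S : Matrix (Fin 4) (Fin 4) ℂ) (l : ℂ)
    (hSym : ∀ i j, S j i = S i j)
    (h1 : S 0 0 + l * S 3 0 = 1)
    (h2 : S 0 1 + l * S 3 1 = 0)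
    (h3 : S 0 2 + l * S 3 2 = 0)
    (h4 : S 0 3 + l * S 3 3 = -l) :
    2 * (S 0 3 * starRingEnd ℂ (S 0 2) * S 2 3 * starRingEnd ℂ (S 3 3)).re =
    -(‖S 0 2‖) ^ 2 + (‖S 2 3‖) ^ 2 * (‖S 0 3‖) ^ 2
      + (‖S 0 2‖) ^ 2 * (‖S 3 3‖) ^ 2 := by
  have h32 : S 3 2 = S 2 3 := hSym 2 3
  have e1 : S 0 2 = -l * S 2 3 := by rw [← h32]; linear_combination h3
  have e2 : S 0 3 = -l - l * S 3 3 := by linear_combination h4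
  rw [e1, e2]
  simp only [Complex.sq_norm]
  simp only [Complex.normSq_apply, Complex.mul_re, Complex.mul_im,
    Complex.conj_re, Complex.conj_im, Complex.neg_re, Complex.neg_im,
    Complex.sub_re, Complex.sub_im]
  ring
end

section
/- Assume s14 ≠ 0, and define a := s33 − s13·s34/s14 and d := s23 − s24·s13/s14. Then |a|² + |d|² = 1. Equivalently, (|s33|² + |s23|²)·|s14|² + (|s24|² + |s34|²)·|s13|² − 2·Re( s14·conj(s13)·(s23·conj(s24) + s33·conj(s34)) ) = |s14|². -/
/-- For a 4×4 unitary symmetric matrix `S` (entries `S i j`, with `S 0 0 = s11`, …,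
`S 3 3 = s44`) satisfying the relations `s11 + λ·s41 = 1`, `s12 + λ·s42 = 0`,
`s13 + λ·s43 = 0`, `s14 + λ·s44 = -λ`, and `s14 ≠ 0`: with
`a := s33 - s13·s34/s14` and `d := s23 - s24·s13/s14`, one has `|a|² + |d|² = 1`;
equivalently `(|s33|² + |s23|²)·|s14|² + (|s24|² + |s34|²)·|s13|²
- 2·Re(s14·conj(s13)·(s23·conj(s24) + s33·conj(s34))) = |s14|²`. -/
theorem abs_a_sq_add_abs_d_sq_eq_one (S : Matrix (Fin 4) (Fin 4) ℂ) (l : ℂ)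
    (hU : S * S.conjTranspose = 1)
    (hSym : ∀ i j, S j i = S i j)
    (h1 : S 0 0 + l * S 3 0 = 1)
    (h2 : S 0 1 + l * S 3 1 = 0)
    (h3 : S 0 2 + l * S 3 2 = 0)
    (h4 : S 0 3 + l * S 3 3 = -l)
    (h14 : S 0 3 ≠ 0) :
    (‖S 2 2 - S 0 2 * S 2 3 / S 0 3‖) ^ 2
      + (‖S 1 2 - S 1 3 * S 0 2 / S 0 3‖) ^ 2 = 1 ∧
    ((‖S 2 2‖) ^ 2 + (‖S 1 2‖) ^ 2) * (‖S 0 3‖) ^ 2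
      + ((‖S 1 3‖) ^ 2 + (‖S 2 3‖) ^ 2) * (‖S 0 2‖) ^ 2
      - 2 * (S 0 3 * starRingEnd ℂ (S 0 2) *
          (S 1 2 * starRingEnd ℂ (S 1 3) + S 2 2 * starRingEnd ℂ (S 2 3))).re
      = (‖S 0 3‖) ^ 2 := by
  have hU' : S.conjTranspose * S = 1 := mul_eq_one_comm.mp hU
  have R1 := congrFun (congrFun hU' 2) 2
  have R2 := congrFun (congrFun hU' 2) 3
  have R3 := congrFun (congrFun hU' 3) 3
  simp [Matrix.mul_apply, Fin.sum_univ_four, Matrix.conjTranspose_apply,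
    Matrix.one_apply] at R1 R2 R3
  have e32 : S 3 2 = S 2 3 := hSym 2 3
  have R2c := congrArg (starRingEnd ℂ) R2
  simp only [map_add, map_mul, map_zero, Complex.conj_conj] at R2c
  rw [e32] at R1 R2 R2c
  have e13 : S 0 2 = -(l * S 2 3) := by rw [e32] at h3; linear_combination h3
  have e14 : S 0 3 = -l - l * S 3 3 := by linear_combination h4
  set c := starRingEnd ℂ with hc
  -- key cleared identity
  have Gc : (S 2 2 * S 0 3 - S 0 2 * S 2 3) * c (S 2 2 * S 0 3 - S 0 2 * S 2 3)
      + (S 1 2 * S 0 3 - S 1 3 * S 0 2) * c (S 1 2 * S 0 3 - S 1 3 * S 0 2)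
      = S 0 3 * c (S 0 3) := by
    simp only [e13, e14] at R1 R2 R2c R3 ⊢
    simp only [map_sub, map_mul, map_add, map_neg] at R1 R2 R2c R3 ⊢
    linear_combination (l * c l * (1 + S 3 3) * (1 + c (S 3 3))) * R1
      + (-(l * c l * S 2 3 * (1 + c (S 3 3)))) * R2
      + (-(l * c l * c (S 2 3) * (1 + S 3 3))) * R2c
      + (l * c l * S 2 3 * c (S 2 3)) * R3
  have hns : Complex.normSq (S 2 2 * S 0 3 - S 0 2 * S 2 3)
      + Complex.normSq (S 1 2 * S 0 3 - S 1 3 * S 0 2) = Complex.normSq (S 0 3) := by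
    have := Gc
    rw [Complex.mul_conj, Complex.mul_conj, Complex.mul_conj] at this
    exact_mod_cast this
  constructor
  · have ha : S 2 2 - S 0 2 * S 2 3 / S 0 3 = (S 2 2 * S 0 3 - S 0 2 * S 2 3) / S 0 3 := by
      field_simp
    have hd : S 1 2 - S 1 3 * S 0 2 / S 0 3 = (S 1 2 * S 0 3 - S 1 3 * S 0 2) / S 0 3 := by
      field_simp
    rw [ha, hd, Complex.sq_norm, Complex.sq_norm, Complex.normSq_div, Complex.normSq_div,
      ← add_div, hns, div_self]
    exact (Complex.normSq_pos.mpr h14).ne'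
  · have hre : ((S 2 2 * S 0 3) * c (S 0 2 * S 2 3) + (S 1 2 * S 0 3) * c (S 1 3 * S 0 2)).re
        = (S 0 3 * c (S 0 2) * (S 1 2 * c (S 1 3) + S 2 2 * c (S 2 3))).re := by
      congr 1
      simp only [map_mul]
      ring
    have h1' := Complex.normSq_sub (S 2 2 * S 0 3) (S 0 2 * S 2 3)
    have h2' := Complex.normSq_sub (S 1 2 * S 0 3) (S 1 3 * S 0 2)
    simp only [Complex.sq_norm, Complex.normSq_mul] at *
    rw [h1', h2'] at hns
    rw [Complex.add_re] at hre
    linarith [hns, hre]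
end

section
/- Assume s14 ≠ 0, and define a := s33 − s13·s34/s14, c := s22 − s12·s42/s14 and d := s23 − s24·s13/s14. Then c·conj(d) + d·conj(a) = 0. -/
/-- For a 4×4 unitary symmetric matrix `S` (entries `S i j`, with `S 0 0 = s11`, …,
`S 3 3 = s44`) with `s14 ≠ 0`: with `a := s33 - s13·s34/s14`, `c := s22 - s12·s42/s14`
and `d := s23 - s24·s13/s14`, one has `c·conj(d) + d·conj(a) = 0`. -/
theorem c_conj_d_add_d_conj_a_eq_zero (S : Matrix (Fin 4) (Fin 4) ℂ)
    (hU : S * S.conjTranspose = 1)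
    (hSym : ∀ i j, S j i = S i j)
    (h14 : S 0 3 ≠ 0) :
    (S 1 1 - S 0 1 * S 3 1 / S 0 3) * starRingEnd ℂ (S 1 2 - S 1 3 * S 0 2 / S 0 3)
      + (S 1 2 - S 1 3 * S 0 2 / S 0 3) * starRingEnd ℂ (S 2 2 - S 0 2 * S 2 3 / S 0 3)
      = 0 := by
  have h14' : star (S 0 3) ≠ 0 := star_ne_zero.mpr h14
  have key : ∀ i j : Fin 4, (S * S.conjTranspose) i j = (1 : Matrix (Fin 4) (Fin 4) ℂ) i j := by
    rw [hU]; intro i j; rfl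
  have h12 := key 1 2
  have h13 := key 1 3
  have h03 := key 0 3
  have h02 := key 0 2
  simp only [Matrix.mul_apply, Fin.sum_univ_four, Matrix.conjTranspose_apply,
    Matrix.one_apply, if_neg (by decide : (1:Fin 4) ≠ 2), if_neg (by decide : (1:Fin 4) ≠ 3),
    if_neg (by decide : (0:Fin 4) ≠ 3), if_neg (by decide : (0:Fin 4) ≠ 2)] at h12 h13 h03 h02
  simp only [hSym 0 1, hSym 0 2, hSym 0 3, hSym 1 2, hSym 1 3, hSym 2 3] at h12 h13 h03 h02 ⊢
  simp only [map_sub, map_mul, map_div₀]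
  simp only [← starRingEnd_apply] at h12 h13 h03 h02 h14'
  field_simp
  linear_combination (S 0 3 * starRingEnd ℂ (S 0 3)) * h12 - (S 0 3 * starRingEnd ℂ (S 0 2)) * h13
    + (S 1 3 * starRingEnd ℂ (S 0 2)) * h03 - (S 1 3 * starRingEnd ℂ (S 0 3)) * h02
end

section
/- Assume s14 ≠ 0, define a := s33 − s13·s34/s14, and assume |a| ≠ 1. Then for every complex number z with |z| = 1, the denominator D(z) := (1 + s44)·(−z + s33) − s34·s43 is nonzero; more precisely D(z) = (−s14/λ)·(a − z). -/
/-- For a 4×4 symmetric matrix `S` (entries `S i j`, with `S 0 0 = s11`, …,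
`S 3 3 = s44`) satisfying the relations `s11 + λ·s41 = 1`, `s12 + λ·s42 = 0`,
`s13 + λ·s43 = 0`, `s14 + λ·s44 = -λ`, with `s14 ≠ 0` and, for
`a := s33 - s13·s34/s14`, `|a| ≠ 1`: for every `z` on the unit circle the
denominator `D(z) := (1 + s44)·(-z + s33) - s34·s43` is nonzero; more precisely
`D(z) = (-s14/λ)·(a - z)`. -/
theorem denominator_nonzero (S : Matrix (Fin 4) (Fin 4) ℂ) (l : ℂ)
    (hSym : ∀ i j, S j i = S i j)
    (h1 : S 0 0 + l * S 3 0 = 1)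
    (h2 : S 0 1 + l * S 3 1 = 0)
    (h3 : S 0 2 + l * S 3 2 = 0)
    (h4 : S 0 3 + l * S 3 3 = -l)
    (h14 : S 0 3 ≠ 0)
    (ha : ‖S 2 2 - S 0 2 * S 2 3 / S 0 3‖ ≠ 1) :
    ∀ z : ℂ, ‖z‖ = 1 →
      (1 + S 3 3) * (-z + S 2 2) - S 2 3 * S 3 2 ≠ 0 ∧
      (1 + S 3 3) * (-z + S 2 2) - S 2 3 * S 3 2
        = (-(S 0 3) / l) * ((S 2 2 - S 0 2 * S 2 3 / S 0 3) - z) := by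
  intro z hz
  have hl : l ≠ 0 := by
    rintro rfl
    simp at h4
    exact h14 h4
  have h32 : S 3 2 = S 2 3 := hSym 2 3
  have heq : (1 + S 3 3) * (-z + S 2 2) - S 2 3 * S 3 2
      = (-(S 0 3) / l) * ((S 2 2 - S 0 2 * S 2 3 / S 0 3) - z) := by
    have e32 : S 3 2 = -(S 0 2) / l := by field_simp; linear_combination h3
    have e33 : S 3 3 = (-l - S 0 3) / l := by field_simp; linear_combination h4
    rw [e32, e33]
    field_simp
    ring
  refine ⟨?_, heq⟩
  rw [heq]
  apply mul_ne_zero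
  · exact div_ne_zero (neg_ne_zero.mpr h14) hl
  · intro h
    apply ha
    rw [sub_eq_zero] at h
    rw [h, hz]
end

section
/- Assume s14 ≠ 0, define a := s33 − s13·s34/s14, c := s22 − s12·s42/s14, d := s23 − s24·s13/s14, and assume |a| ≠ 1. Then for every complex number z with |z| = 1, setting D(z) := (1 + s44)·(−z + s33) − s34·s43 (which is nonzero), one has the identity s22 + ( s24·s43·s32 − s23·(1 + s44)·s32 )/D(z) + ( s24·(z − s33)·s42 + s23·s34·s42 )/D(z) = c − d²/(a − z). -/
/-- For a 4×4 symmetric matrix `S` (entries `S i j`, with `S 0 0 = s11`, …,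
`S 3 3 = s44`) satisfying the relations `s11 + λ·s41 = 1`, `s12 + λ·s42 = 0`,
`s13 + λ·s43 = 0`, `s14 + λ·s44 = -λ`, with `s14 ≠ 0` and, for
`a := s33 - s13·s34/s14`, `|a| ≠ 1`: for every `z` on the unit circle, with
`D(z) := (1 + s44)·(-z + s33) - s34·s43` (which is nonzero), one has
`s22 + (s24·s43·s32 - s23·(1 + s44)·s32)/D(z) + (s24·(z - s33)·s42 + s23·s34·s42)/D(z)
 = c - d²/(a - z)` where `c := s22 - s12·s42/s14` and `d := s23 - s24·s13/s14`. -/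
theorem s22_asy_simplification (S : Matrix (Fin 4) (Fin 4) ℂ) (l : ℂ)
    (hSym : ∀ i j, S j i = S i j)
    (h1 : S 0 0 + l * S 3 0 = 1)
    (h2 : S 0 1 + l * S 3 1 = 0)
    (h3 : S 0 2 + l * S 3 2 = 0)
    (h4 : S 0 3 + l * S 3 3 = -l)
    (h14 : S 0 3 ≠ 0)
    (ha : ‖S 2 2 - S 0 2 * S 2 3 / S 0 3‖ ≠ 1) :
    ∀ z : ℂ, ‖z‖ = 1 →
      (1 + S 3 3) * (-z + S 2 2) - S 2 3 * S 3 2 ≠ 0 ∧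
      S 1 1
        + (S 1 3 * S 3 2 * S 2 1 - S 1 2 * (1 + S 3 3) * S 2 1)
            / ((1 + S 3 3) * (-z + S 2 2) - S 2 3 * S 3 2)
        + (S 1 3 * (z - S 2 2) * S 3 1 + S 1 2 * S 2 3 * S 3 1)
            / ((1 + S 3 3) * (-z + S 2 2) - S 2 3 * S 3 2)
      = (S 1 1 - S 0 1 * S 3 1 / S 0 3)
        - (S 1 2 - S 1 3 * S 0 2 / S 0 3) ^ 2
            / ((S 2 2 - S 0 2 * S 2 3 / S 0 3) - z) := by

  intro z hz
  have e21 : S 2 1 = S 1 2 := hSym 1 2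
  have e31 : S 3 1 = S 1 3 := hSym 1 3
  have e32 : S 3 2 = S 2 3 := hSym 2 3
  have hl : l ≠ 0 := by
    intro h
    rw [h] at h4
    simp at h4
    exact h14 h4
  have haz : (S 2 2 - S 0 2 * S 2 3 / S 0 3) - z ≠ 0 := by
    refine sub_ne_zero.mpr fun h => ha ?_
    rw [h, hz]
  have h33 : 1 + S 3 3 = -S 0 3 / l := by
    field_simp
    linear_combination h4
  have h02 : S 0 2 = -l * S 2 3 := by linear_combination h3 - l * e32
  have h01 : S 0 1 = -l * S 1 3 := by linear_combination h2 - l * e31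
  have hD : (1 + S 3 3) * (-z + S 2 2) - S 2 3 * S 3 2
      = (-S 0 3 / l) * ((S 2 2 - S 0 2 * S 2 3 / S 0 3) - z) := by
    rw [h33, e32, h02]
    field_simp
    ring
  refine ⟨?_, ?_⟩
  · rw [hD]
    exact mul_ne_zero (div_ne_zero (neg_ne_zero.mpr h14) hl) haz
  · have hden : S 2 2 * S 0 3 + l * S 2 3 ^ 2 - S 0 3 * z ≠ 0 := by
      intro h
      apply haz
      rw [h02]
      field_simp
      linear_combination h
    have hfact : S 2 2 - S 0 2 * S 2 3 / S 0 3 - z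
        = (S 2 2 * S 0 3 + l * S 2 3 ^ 2 - S 0 3 * z) / S 0 3 := by
      rw [h02]; field_simp; ring
    rw [hD, hfact, e21, e31, e32, h33, h01, h02]
    have hden' : S 0 3 * S 2 2 + S 2 3 ^ 2 * l - S 0 3 * z ≠ 0 := by
      intro h; apply hden; linear_combination h
    field_simp [hden, hden']
    ring
end

section
/- Assume s14 ≠ 0, define a := s33 − s13·s34/s14, and assume |a| ≠ 1. Let k > 0 be a real number and define, for real L > 1, s22^asy(L) := s22 + ( s24·s43·s32 − s23·(1 + s44)·s32 )/D(L) + ( s24·(exp(−2ikL) − s33)·s42 + s23·s34·s42 )/D(L), where D(L) := (1 + s44)·(−exp(−2ikL) + s33) − s34·s43 (which is nonzero for all L > 1). Then the set { s22^asy(L) : L ∈ ℝ, L > 1 } is exactly the unit circle { w ∈ ℂ : |w| = 1 }. -/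
open Complex

private lemma key2 (a A B z : ℂ)
    (F1 : a * (starRingEnd ℂ) a + B * (starRingEnd ℂ) B = 1)
    (F2 : A * (starRingEnd ℂ) B + B * (starRingEnd ℂ) a = 0)
    (F3 : A * (starRingEnd ℂ) A + B * (starRingEnd ℂ) B = 1)
    (hz : z * (starRingEnd ℂ) z = 1) :
    (A * (z - a) + B ^ 2) *
      ((starRingEnd ℂ) A * ((starRingEnd ℂ) z - (starRingEnd ℂ) a) + ((starRingEnd ℂ) B) ^ 2)
      = (z - a) * ((starRingEnd ℂ) z - (starRingEnd ℂ) a) := by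
  have F2c : (starRingEnd ℂ) A * B + (starRingEnd ℂ) B * a = 0 := by
    have h := congrArg (starRingEnd ℂ) F2
    simpa [map_add, map_mul] using h
  linear_combination ((z - a) * ((starRingEnd ℂ) z - (starRingEnd ℂ) a)) * F3
    + ((starRingEnd ℂ) B * (z - a)) * F2
    + (B * ((starRingEnd ℂ) z - (starRingEnd ℂ) a)) * F2c
    + (B * (starRingEnd ℂ) B) * F1 - (B * (starRingEnd ℂ) B) * hz

private lemma exists_exp_eq (k : ℝ) (hk : 0 < k) (z : ℂ) (hz : ‖z‖ = 1) :
    ∃ L : ℝ, 1 < L ∧ Complex.exp (-(2 * Complex.I * (k : ℂ) * (L : ℂ))) = z := by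
  obtain ⟨n, hn⟩ := exists_nat_gt ((2 * k + z.arg) / (2 * Real.pi))
  have hπ := Real.pi_pos
  have hn' : 2 * k + z.arg < (n : ℝ) * (2 * Real.pi) := (div_lt_iff₀ (by linarith)).mp hn
  refine ⟨(2 * Real.pi * n - z.arg) / (2 * k), ?_, ?_⟩
  · rw [lt_div_iff₀ (by linarith)]
    nlinarith
  · have hk' : (k : ℂ) ≠ 0 := Complex.ofReal_ne_zero.mpr (ne_of_gt hk)
    have harg : Complex.exp ((z.arg : ℂ) * Complex.I) = z := by
      have h := Complex.norm_mul_exp_arg_mul_I z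
      rwa [hz, Complex.ofReal_one, one_mul] at h
    have hc : -(2 * Complex.I * (k : ℂ) * (((2 * Real.pi * n - z.arg) / (2 * k) : ℝ) : ℂ))
        = (z.arg : ℂ) * Complex.I - ((n : ℤ) : ℂ) * (2 * (Real.pi : ℂ) * Complex.I) := by
      push_cast
      field_simp
      ring
    rw [hc, Complex.exp_sub, Complex.exp_int_mul_two_pi_mul_I, div_one, harg]

private lemma mess (s11 s12 s13 s22 s23 s33 z : ℂ) (hβ : 1 + s33 ≠ 0)
    (hz : z - (s22 - s23 ^ 2 / (1 + s33)) ≠ 0)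
    (hD : (1 + s33) * (-z + s22) - s23 * s23 ≠ 0) :
    s11 + (s13 * s23 * s12 - s12 * (1 + s33) * s12) / ((1 + s33) * (-z + s22) - s23 * s23)
      + (s13 * (z - s22) * s13 + s12 * s23 * s13) / ((1 + s33) * (-z + s22) - s23 * s23)
    = (s11 - s13 ^ 2 / (1 + s33))
      + (s12 - s13 * s23 / (1 + s33)) ^ 2 / (z - (s22 - s23 ^ 2 / (1 + s33))) := by
  have e : z - (s22 - s23 ^ 2 / (1 + s33))
      = (z * (1 + s33) - s22 * (1 + s33) + s23 ^ 2) / (1 + s33) := by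
    field_simp
    ring
  have hP : z * (1 + s33) - s22 * (1 + s33) + s23 ^ 2 ≠ 0 := by
    intro h
    apply hz
    rw [e, h, zero_div]
  rw [e, div_div_eq_mul_div]
  have hinv : ((1 + s33) * (-z + s22) - s23 * s23)⁻¹ = -(z * (1 + s33) - s22 * (1 + s33) + s23 ^ 2)⁻¹ := by
    rw [← inv_neg]; congr 1; ring
  simp only [div_eq_mul_inv, hinv]
  field_simp
  have hPP : (s33 * z - s33 * s22 + s23 ^ 2 + z - s22) * (s33 * z - s33 * s22 + s23 ^ 2 + z - s22)⁻¹ = 1 :=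
    mul_inv_cancel₀ (by intro h; apply hP; linear_combination h)
  linear_combination (-s13 ^ 2) * hPP



/-- For a 4×4 unitary symmetric matrix `S` (entries `S i j`, with `S 0 0 = s11`, …,
`S 3 3 = s44`) satisfying the relations `s11 + λ·s41 = 1`, `s12 + λ·s42 = 0`,
`s13 + λ·s43 = 0`, `s14 + λ·s44 = -λ`, with `s14 ≠ 0`, `|a| ≠ 1` for
`a := s33 - s13·s34/s14`, and `k > 0`: the set
`{ s22^asy(L) : L > 1 }` with
`s22^asy(L) := s22 + (s24·s43·s32 - s23·(1+s44)·s32)/D(L)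
  + (s24·(exp(-2ikL) - s33)·s42 + s23·s34·s42)/D(L)` and
`D(L) := (1+s44)·(-exp(-2ikL) + s33) - s34·s43` is exactly the unit circle. -/
theorem s22_asy_runs_on_unit_circle (S : Matrix (Fin 4) (Fin 4) ℂ) (l : ℂ) (k : ℝ)
    (hU : S * S.conjTranspose = 1)
    (hSym : ∀ i j, S j i = S i j)
    (h1 : S 0 0 + l * S 3 0 = 1)
    (h2 : S 0 1 + l * S 3 1 = 0)
    (h3 : S 0 2 + l * S 3 2 = 0)
    (h4 : S 0 3 + l * S 3 3 = -l)
    (h14 : S 0 3 ≠ 0)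
    (ha : ‖S 2 2 - S 0 2 * S 2 3 / S 0 3‖ ≠ 1)
    (hk : 0 < k) :
    {w : ℂ | ∃ L : ℝ, 1 < L ∧
      w = S 1 1
        + (S 1 3 * S 3 2 * S 2 1 - S 1 2 * (1 + S 3 3) * S 2 1)
            / ((1 + S 3 3) * (-Complex.exp (-(2 * Complex.I * (k : ℂ) * (L : ℂ))) + S 2 2)
                - S 2 3 * S 3 2)
        + (S 1 3 * (Complex.exp (-(2 * Complex.I * (k : ℂ) * (L : ℂ))) - S 2 2) * S 3 1
            + S 1 2 * S 2 3 * S 3 1)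
            / ((1 + S 3 3) * (-Complex.exp (-(2 * Complex.I * (k : ℂ) * (L : ℂ))) + S 2 2)
                - S 2 3 * S 3 2)} =
    {w : ℂ | ‖w‖ = 1} := by
  -- unitarity equations, one per needed pair of rows
  have hu := fun i j => congrFun (congrFun hU i) j
  have h11 := hu 1 1; have h12 := hu 1 2; have h13 := hu 1 3
  have h22 := hu 2 2; have h23 := hu 2 3; have h31 := hu 3 1
  have h32 := hu 3 2; have h33 := hu 3 3
  simp only [Matrix.mul_apply, Matrix.conjTranspose_apply, Fin.sum_univ_four, Matrix.one_apply,
    Complex.star_def, if_true, reduceIte] at h11 h12 h13 h22 h23 h31 h32 h33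
  -- normalize all entries to upper-triangular form
  simp only [hSym 0 1, hSym 0 2, hSym 0 3, hSym 1 2, hSym 1 3, hSym 2 3]
    at h11 h12 h13 h22 h23 h31 h32 h33 h2 h3 h4 ⊢
  simp only [Fin.reduceEq, reduceIte] at h12 h13 h23 h31 h32
  -- basic nonvanishing facts
  have hl : l ≠ 0 := by
    intro h
    apply h14
    rw [h] at h4
    simpa using h4
  have hs03 : S 0 3 = -l * (1 + S 3 3) := by linear_combination h4
  have hβ : (1 : ℂ) + S 3 3 ≠ 0 := by
    intro h
    apply h14
    rw [hs03, h, mul_zero]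
  have hcβ : (1 : ℂ) + (starRingEnd ℂ) (S 3 3) ≠ 0 := by
    intro h
    apply hβ
    have := congrArg (starRingEnd ℂ) h
    simpa using this
  -- decoupling relations
  have E1 : (1 + S 3 3) * S 0 1 = S 1 3 * S 0 3 := by
    linear_combination (1 + S 3 3) * h2 - S 1 3 * hs03
  have E2 : (1 + S 3 3) * S 0 2 = S 2 3 * S 0 3 := by
    linear_combination (1 + S 3 3) * h3 - S 2 3 * hs03
  -- effective 2x2 quantities
  set β : ℂ := 1 + S 3 3 with hβdef
  set A : ℂ := S 1 1 - S 1 3 ^ 2 / β with hAdef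
  set B : ℂ := S 1 2 - S 1 3 * S 2 3 / β with hBdef
  set a : ℂ := S 2 2 - S 2 3 ^ 2 / β with hadef
  -- the three key unitarity identities (cleared of denominators)
  have F1' : (β * S 2 2 - S 2 3 ^ 2) *
        ((1 + (starRingEnd ℂ) (S 3 3)) * (starRingEnd ℂ) (S 2 2) - ((starRingEnd ℂ) (S 2 3)) ^ 2)
      + (β * S 1 2 - S 1 3 * S 2 3) *
        ((1 + (starRingEnd ℂ) (S 3 3)) * (starRingEnd ℂ) (S 1 2)
          - (starRingEnd ℂ) (S 1 3) * (starRingEnd ℂ) (S 2 3))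
      = β * (1 + (starRingEnd ℂ) (S 3 3)) := by
    rw [hβdef]
    linear_combination ((1 + S 3 3) * (1 + (starRingEnd ℂ) (S 3 3))) * h22
      - ((1 + S 3 3) * (starRingEnd ℂ) (S 2 3)) * h23
      - ((1 + (starRingEnd ℂ) (S 3 3)) * S 2 3) * h32
      + (S 2 3 * (starRingEnd ℂ) (S 2 3)) * h33
      - ((1 + (starRingEnd ℂ) (S 3 3)) * (starRingEnd ℂ) (S 0 2)
          - (starRingEnd ℂ) (S 2 3) * (starRingEnd ℂ) (S 0 3)) * E2
  have F3' : (β * S 1 1 - S 1 3 ^ 2) *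
        ((1 + (starRingEnd ℂ) (S 3 3)) * (starRingEnd ℂ) (S 1 1) - ((starRingEnd ℂ) (S 1 3)) ^ 2)
      + (β * S 1 2 - S 1 3 * S 2 3) *
        ((1 + (starRingEnd ℂ) (S 3 3)) * (starRingEnd ℂ) (S 1 2)
          - (starRingEnd ℂ) (S 1 3) * (starRingEnd ℂ) (S 2 3))
      = β * (1 + (starRingEnd ℂ) (S 3 3)) := by
    rw [hβdef]
    linear_combination ((1 + S 3 3) * (1 + (starRingEnd ℂ) (S 3 3))) * h11
      - ((1 + S 3 3) * (starRingEnd ℂ) (S 1 3)) * h13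
      - ((1 + (starRingEnd ℂ) (S 3 3)) * S 1 3) * h31
      + (S 1 3 * (starRingEnd ℂ) (S 1 3)) * h33
      - ((1 + (starRingEnd ℂ) (S 3 3)) * (starRingEnd ℂ) (S 0 1)
          - (starRingEnd ℂ) (S 1 3) * (starRingEnd ℂ) (S 0 3)) * E1
  have F2' : (β * S 1 1 - S 1 3 ^ 2) *
        ((1 + (starRingEnd ℂ) (S 3 3)) * (starRingEnd ℂ) (S 1 2)
          - (starRingEnd ℂ) (S 1 3) * (starRingEnd ℂ) (S 2 3))
      + (β * S 1 2 - S 1 3 * S 2 3) *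
        ((1 + (starRingEnd ℂ) (S 3 3)) * (starRingEnd ℂ) (S 2 2) - ((starRingEnd ℂ) (S 2 3)) ^ 2)
      = 0 := by
    rw [hβdef]
    linear_combination ((1 + S 3 3) * (1 + (starRingEnd ℂ) (S 3 3))) * h12
      - ((1 + S 3 3) * (starRingEnd ℂ) (S 2 3)) * h13
      - ((1 + (starRingEnd ℂ) (S 3 3)) * S 1 3) * h32
      + (S 1 3 * (starRingEnd ℂ) (S 2 3)) * h33
      - ((1 + (starRingEnd ℂ) (S 3 3)) * (starRingEnd ℂ) (S 0 2)
          - (starRingEnd ℂ) (S 2 3) * (starRingEnd ℂ) (S 0 3)) * E1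
  -- conjugates of the effective quantities
  have hca : (starRingEnd ℂ) a
      = (starRingEnd ℂ) (S 2 2) - ((starRingEnd ℂ) (S 2 3)) ^ 2 / (1 + (starRingEnd ℂ) (S 3 3)) := by
    rw [hadef, hβdef]; simp [map_sub, map_div₀, map_pow, map_add]
  have hcA : (starRingEnd ℂ) A
      = (starRingEnd ℂ) (S 1 1) - ((starRingEnd ℂ) (S 1 3)) ^ 2 / (1 + (starRingEnd ℂ) (S 3 3)) := by
    rw [hAdef, hβdef]; simp [map_sub, map_div₀, map_pow, map_add]
  have hcB : (starRingEnd ℂ) B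
      = (starRingEnd ℂ) (S 1 2)
        - (starRingEnd ℂ) (S 1 3) * (starRingEnd ℂ) (S 2 3) / (1 + (starRingEnd ℂ) (S 3 3)) := by
    rw [hBdef, hβdef]; simp [map_sub, map_div₀, map_mul, map_add]
  -- divided versions
  have F1 : a * (starRingEnd ℂ) a + B * (starRingEnd ℂ) B = 1 := by
    rw [hca, hcB, hadef, hBdef]
    field_simp
    linear_combination F1'
  have F3 : A * (starRingEnd ℂ) A + B * (starRingEnd ℂ) B = 1 := by
    rw [hcA, hcB, hAdef, hBdef]
    field_simp
    linear_combination F3'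
  have F2 : A * (starRingEnd ℂ) B + B * (starRingEnd ℂ) a = 0 := by
    rw [hca, hcB, hAdef, hBdef]
    field_simp
    linear_combination F2'
  -- |a| facts
  have haexpr : S 2 2 - S 0 2 * S 2 3 / S 0 3 = a := by
    rw [hadef, hβdef]
    field_simp [show (1 : ℂ) + S 3 3 ≠ 0 from hβ]
    linear_combination (-(S 2 3)) * E2
  rw [haexpr] at ha
  have hnorm1 : Complex.normSq a + Complex.normSq B = 1 := by
    have h := F1
    rw [Complex.mul_conj, Complex.mul_conj, ← Complex.ofReal_add] at h
    exact_mod_cast h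
  have hnorm3 : Complex.normSq A + Complex.normSq B = 1 := by
    have h := F3
    rw [Complex.mul_conj, Complex.mul_conj, ← Complex.ofReal_add] at h
    exact_mod_cast h
  have habs_a_lt : ‖a‖ < 1 := by
    have h1' : Complex.normSq a ≤ 1 := by nlinarith [Complex.normSq_nonneg B]
    have h2' : ‖a‖ ≤ 1 := by
      rw [Complex.norm_def]
      exact Real.sqrt_le_one.mpr h1'
    exact lt_of_le_of_ne h2' ha
  have hB0 : B ≠ 0 := by
    intro h
    apply ha
    rw [h, Complex.normSq_zero, add_zero] at hnorm1
    rw [Complex.norm_def, hnorm1, Real.sqrt_one]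
  have habs_A_lt : ‖A‖ < 1 := by
    have hAa : Complex.normSq A = Complex.normSq a := by linarith
    rw [Complex.norm_def, hAa, ← Complex.norm_def]
    exact habs_a_lt
  -- |A + B²/(z-a)| = 1 whenever |z| = 1
  have habs1 : ∀ z : ℂ, ‖z‖ = 1 → z ≠ a →
      ‖A + B ^ 2 / (z - a)‖ = 1 := by
    intro z hz1 hza
    have hzsub : z - a ≠ 0 := sub_ne_zero.mpr hza
    have hzc : z * (starRingEnd ℂ) z = 1 := by
      rw [Complex.mul_conj]
      norm_cast
      rw [← Complex.sq_norm, hz1]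
      norm_num
    have hK : (starRingEnd ℂ) z - (starRingEnd ℂ) a ≠ 0 := by
      intro h
      apply hzsub
      have h' := congrArg (starRingEnd ℂ) h
      simpa [map_sub] using h'
    have key := key2 a A B z F1 F2 F3 hzc
    have hmul : (A + B ^ 2 / (z - a)) * (starRingEnd ℂ) (A + B ^ 2 / (z - a)) = 1 := by
      have hconj : (starRingEnd ℂ) (A + B ^ 2 / (z - a))
          = (starRingEnd ℂ) A
            + ((starRingEnd ℂ) B) ^ 2 / ((starRingEnd ℂ) z - (starRingEnd ℂ) a) := by
        simp [map_add, map_div₀, map_pow, map_sub]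
      have e1 : A + B ^ 2 / (z - a) = (A * (z - a) + B ^ 2) / (z - a) := by
        field_simp
      have e2 : (starRingEnd ℂ) A
            + ((starRingEnd ℂ) B) ^ 2 / ((starRingEnd ℂ) z - (starRingEnd ℂ) a)
          = ((starRingEnd ℂ) A * ((starRingEnd ℂ) z - (starRingEnd ℂ) a)
              + ((starRingEnd ℂ) B) ^ 2) / ((starRingEnd ℂ) z - (starRingEnd ℂ) a) := by
        field_simp
      rw [hconj, e1, e2, div_mul_div_comm, key, div_self (mul_ne_zero hzsub hK)]
    have hns : Complex.normSq (A + B ^ 2 / (z - a)) = 1 := by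
      have h := hmul
      rw [Complex.mul_conj] at h
      exact_mod_cast h
    rw [Complex.norm_def, hns, Real.sqrt_one]
  -- set equality
  ext w
  simp only [Set.mem_setOf_eq]
  constructor
  · rintro ⟨L, hL, hw⟩
    have habsz : ‖Complex.exp (-(2 * Complex.I * (k : ℂ) * (L : ℂ)))‖ = 1 := by
      rw [Complex.norm_exp]
      simp
    have hza : Complex.exp (-(2 * Complex.I * (k : ℂ) * (L : ℂ))) ≠ a := by
      intro h
      rw [h] at habsz
      exact ha habsz
    have hz' : Complex.exp (-(2 * Complex.I * (k : ℂ) * (L : ℂ)))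
        - (S 2 2 - S 2 3 ^ 2 / (1 + S 3 3)) ≠ 0 := by
      rw [← hβdef, ← hadef]
      exact sub_ne_zero.mpr hza
    have hD' : (1 + S 3 3) * (-Complex.exp (-(2 * Complex.I * (k : ℂ) * (L : ℂ))) + S 2 2)
        - S 2 3 * S 2 3 ≠ 0 := by
      have hDeq : (1 + S 3 3) * (-Complex.exp (-(2 * Complex.I * (k : ℂ) * (L : ℂ))) + S 2 2)
          - S 2 3 * S 2 3
          = (1 + S 3 3) * ((S 2 2 - S 2 3 ^ 2 / (1 + S 3 3))
              - Complex.exp (-(2 * Complex.I * (k : ℂ) * (L : ℂ)))) := by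
        field_simp [show (1 : ℂ) + S 3 3 ≠ 0 from hβ]
        ring
      rw [hDeq]
      exact mul_ne_zero hβ (sub_ne_zero.mpr (Ne.symm (sub_ne_zero.mp hz')))
    rw [hw, hβdef, mess (S 1 1) (S 1 2) (S 1 3) (S 2 2) (S 2 3) (S 3 3) _ hβ hz' hD',
      ← hβdef, ← hAdef, ← hBdef, ← hadef]
    exact habs1 _ habsz hza
  · intro hw1
    have hwc : w * (starRingEnd ℂ) w = 1 := by
      rw [Complex.mul_conj]
      norm_cast
      rw [← Complex.sq_norm, hw1]
      norm_num
    have hwA : w - A ≠ 0 := by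
      intro h
      have hA1 : ‖A‖ = 1 := by rw [← sub_eq_zero.mp h]; exact hw1
      exact (ne_of_lt habs_A_lt) hA1
    have F2swap : a * (starRingEnd ℂ) B + B * (starRingEnd ℂ) A = 0 := by
      have h := congrArg (starRingEnd ℂ) F2
      simp only [map_add, map_mul, Complex.conj_conj, map_zero] at h
      linear_combination h
    set z0 : ℂ := a + B ^ 2 / (w - A) with hz0def
    have hz0a : z0 - a = B ^ 2 / (w - A) := by rw [hz0def]; ring
    have hz0ne : z0 ≠ a := by
      intro h
      have h0 : B ^ 2 / (w - A) = 0 := by rw [← hz0a, h, sub_self]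
      rcases div_eq_zero_iff.mp h0 with h1 | h1
      · exact pow_ne_zero 2 hB0 h1
      · exact hwA h1
    have hKc : (starRingEnd ℂ) w - (starRingEnd ℂ) A ≠ 0 := by
      intro h
      apply hwA
      have h' := congrArg (starRingEnd ℂ) h
      simpa [map_sub] using h'
    have key' := key2 A a B w F3 F2swap F1 hwc
    have habsz0 : ‖z0‖ = 1 := by
      have e : z0 = (a * (w - A) + B ^ 2) / (w - A) := by
        rw [hz0def]
        field_simp
      have hconj : (starRingEnd ℂ) ((a * (w - A) + B ^ 2) / (w - A))
          = ((starRingEnd ℂ) a * ((starRingEnd ℂ) w - (starRingEnd ℂ) A)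
              + ((starRingEnd ℂ) B) ^ 2) / ((starRingEnd ℂ) w - (starRingEnd ℂ) A) := by
        simp [map_add, map_mul, map_div₀, map_pow, map_sub]
      have hmul : z0 * (starRingEnd ℂ) z0 = 1 := by
        rw [e, hconj, div_mul_div_comm, key', div_self (mul_ne_zero hwA hKc)]
      have hns : Complex.normSq z0 = 1 := by
        have h := hmul
        rw [Complex.mul_conj] at h
        exact_mod_cast h
      rw [Complex.norm_def, hns, Real.sqrt_one]
    obtain ⟨L, hL, hLz⟩ := exists_exp_eq k hk z0 habsz0
    refine ⟨L, hL, ?_⟩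
    have hz' : z0 - (S 2 2 - S 2 3 ^ 2 / (1 + S 3 3)) ≠ 0 := by
      rw [← hβdef, ← hadef]
      exact sub_ne_zero.mpr hz0ne
    have hD' : (1 + S 3 3) * (-z0 + S 2 2) - S 2 3 * S 2 3 ≠ 0 := by
      have hDeq : (1 + S 3 3) * (-z0 + S 2 2) - S 2 3 * S 2 3
          = (1 + S 3 3) * ((S 2 2 - S 2 3 ^ 2 / (1 + S 3 3)) - z0) := by
        field_simp [show (1 : ℂ) + S 3 3 ≠ 0 from hβ]
        ring
      rw [hDeq]
      exact mul_ne_zero hβ (sub_ne_zero.mpr (Ne.symm (sub_ne_zero.mp hz')))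
    rw [hLz, hβdef, mess (S 1 1) (S 1 2) (S 1 3) (S 2 2) (S 2 3) (S 3 3) z0 hβ hz' hD',
      ← hβdef, ← hAdef, ← hBdef, ← hadef, hz0a, div_div_eq_mul_div, mul_comm, mul_div_assoc,
      div_self (pow_ne_zero 2 hB0), mul_one]
    ring
end

section
/- Assume s14 ≠ 0, define a := s33 − s13·s34/s14, and assume |a| ≠ 1. Let k > 0 be a real number and define, for real L > 1, s22^asy(L) := s22 + ( s24·s43·s32 − s23·(1 + s44)·s32 )/D(L) + ( s24·(exp(−2ikL) − s33)·s42 + s23·s34·s42 )/D(L), where D(L) := (1 + s44)·(−exp(−2ikL) + s33) − s34·s43 (which is nonzero for all L > 1). Then the set { L ∈ ℝ : L > 1 and s22^asy(L) = −1 } is infinite. -/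
theorem my_det_fin_four {R : Type*} [CommRing R] (A : Matrix (Fin 4) (Fin 4) R) :
    A.det =
      A 0 0 * (A 1 1 * A 2 2 * A 3 3 - A 1 1 * A 2 3 * A 3 2 - A 1 2 * A 2 1 * A 3 3
        + A 1 2 * A 2 3 * A 3 1 + A 1 3 * A 2 1 * A 3 2 - A 1 3 * A 2 2 * A 3 1)
      - A 0 1 * (A 1 0 * A 2 2 * A 3 3 - A 1 0 * A 2 3 * A 3 2 - A 1 2 * A 2 0 * A 3 3
        + A 1 2 * A 2 3 * A 3 0 + A 1 3 * A 2 0 * A 3 2 - A 1 3 * A 2 2 * A 3 0)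
      + A 0 2 * (A 1 0 * A 2 1 * A 3 3 - A 1 0 * A 2 3 * A 3 1 - A 1 1 * A 2 0 * A 3 3
        + A 1 1 * A 2 3 * A 3 0 + A 1 3 * A 2 0 * A 3 1 - A 1 3 * A 2 1 * A 3 0)
      - A 0 3 * (A 1 0 * A 2 1 * A 3 2 - A 1 0 * A 2 2 * A 3 1 - A 1 1 * A 2 0 * A 3 2
        + A 1 1 * A 2 2 * A 3 0 + A 1 2 * A 2 0 * A 3 1 - A 1 2 * A 2 1 * A 3 0) := by
  rw [Matrix.det_succ_row_zero]
  simp [Fin.sum_univ_succ, Matrix.det_fin_three, Matrix.submatrix_apply, Fin.succAbove,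
    show (Fin.succ 2 : Fin 4) = 3 from rfl, show (Fin.castSucc 2 : Fin 4) = 2 by decide,
    show (Fin.castSucc 1 : Fin 4) = 1 by decide, show (Fin.castSucc 0 : Fin 4) = 0 by decide,
    show (Fin.succ 1 : Fin 4) = 2 from rfl, show (Fin.succ 0 : Fin 4) = 1 from rfl]
  norm_num
  ring



/-- For a 4×4 unitary symmetric matrix `S` (entries `S i j`, with `S 0 0 = s11`, …,
`S 3 3 = s44`) satisfying the relations `s11 + λ·s41 = 1`, `s12 + λ·s42 = 0`,
`s13 + λ·s43 = 0`, `s14 + λ·s44 = -λ`, with `s14 ≠ 0`, `|a| ≠ 1` for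
`a := s33 - s13·s34/s14`, and `k > 0`: the set of `L > 1` such that
`s22^asy(L) = -1` (with `s22^asy` and `D` as in the asymptotic formula) is infinite. -/
theorem trapped_modes_infinitely_often (S : Matrix (Fin 4) (Fin 4) ℂ) (l : ℂ) (k : ℝ)
    (hU : S * S.conjTranspose = 1)
    (hSym : ∀ i j, S j i = S i j)
    (h1 : S 0 0 + l * S 3 0 = 1)
    (h2 : S 0 1 + l * S 3 1 = 0)
    (h3 : S 0 2 + l * S 3 2 = 0)
    (h4 : S 0 3 + l * S 3 3 = -l)
    (h14 : S 0 3 ≠ 0)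
    (ha : ‖S 2 2 - S 0 2 * S 2 3 / S 0 3‖ ≠ 1)
    (hk : 0 < k) :
    {L : ℝ | 1 < L ∧
      S 1 1
        + (S 1 3 * S 3 2 * S 2 1 - S 1 2 * (1 + S 3 3) * S 2 1)
            / ((1 + S 3 3) * (-Complex.exp (-(2 * Complex.I * (k : ℂ) * (L : ℂ))) + S 2 2)
                - S 2 3 * S 3 2)
        + (S 1 3 * (Complex.exp (-(2 * Complex.I * (k : ℂ) * (L : ℂ))) - S 2 2) * S 3 1
            + S 1 2 * S 2 3 * S 3 1)
            / ((1 + S 3 3) * (-Complex.exp (-(2 * Complex.I * (k : ℂ) * (L : ℂ))) + S 2 2)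
                - S 2 3 * S 3 2)
      = -1}.Infinite := by
  have e14 : S 0 3 = -(l*(1+S 3 3)) := by linear_combination h4
  have e13 : S 0 2 = -(l * S 2 3) := by linear_combination h3 - l * hSym 2 3
  have e12 : S 0 1 = -(l * S 1 3) := by linear_combination h2 - l * hSym 1 3
  have e11 : S 0 0 = 1 + l*(l*(1+S 3 3)) := by
    linear_combination h1 - l * hSym 0 3 - l * e14
  have hl : l ≠ 0 := by intro h; exact h14 (by rw [e14, h]; ring)
  have ht : (1:ℂ) + S 3 3 ≠ 0 := by intro h; exact h14 (by rw [e14, h]; ring)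
  have hconj : S.conjTranspose = S.map (starRingEnd ℂ) := by
    ext i j
    simp [Matrix.conjTranspose_apply, Matrix.map_apply, hSym i j]
  rw [hconj] at hU
  have hdetc : S.det * (starRingEnd ℂ) S.det = 1 := by
    have h := congrArg Matrix.det hU
    rw [Matrix.det_mul, Matrix.det_one] at h
    rwa [RingHom.map_det, RingHom.mapMatrix_apply]
  have hdet0 : S.det ≠ 0 := by
    intro h; rw [h, zero_mul] at hdetc; exact zero_ne_one hdetc
  have hadj : S.adjugate = S.det • S.map (starRingEnd ℂ) := by
    calc S.adjugate = S.adjugate * (S * S.map (starRingEnd ℂ)) := by rw [hU, mul_one]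
    _ = (S.adjugate * S) * (S.map (starRingEnd ℂ)) := by rw [Matrix.mul_assoc]
    _ = (S.det • (1:Matrix (Fin 4) (Fin 4) ℂ)) * (S.map (starRingEnd ℂ)) := by
        rw [Matrix.adjugate_mul]
    _ = S.det • S.map (starRingEnd ℂ) := by rw [Matrix.smul_mul, Matrix.one_mul]
  have bridge : ∀ i j, S.det * (starRingEnd ℂ) (S i j) = S.adjugate i j := by
    intro i j; rw [hadj]; simp [Matrix.smul_apply, Matrix.map_apply]
  have b44 : S.det * (starRingEnd ℂ) (S 3 3) =
      -(S 0 2*S 0 2*S 1 1) + 2*S 0 1*S 0 2*S 1 2 - S 0 1*S 0 1*S 2 2 - S 0 0*S 1 2*S 1 2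
      + S 0 0*S 1 1*S 2 2 := by
    rw [bridge 3 3, Matrix.adjugate_apply, my_det_fin_four]
    simp [Matrix.updateRow_apply, Pi.single_apply,
      hSym 0 1, hSym 0 2, hSym 0 3, hSym 1 2, hSym 1 3, hSym 2 3]
    ring
  have b33 : S.det * (starRingEnd ℂ) (S 2 2) =
      -(S 0 3*S 0 3*S 1 1) + 2*S 0 1*S 0 3*S 1 3 - S 0 1*S 0 1*S 3 3 - S 0 0*S 1 3*S 1 3
      + S 0 0*S 1 1*S 3 3 := by
    rw [bridge 2 2, Matrix.adjugate_apply, my_det_fin_four]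
    simp [Matrix.updateRow_apply, Pi.single_apply,
      hSym 0 1, hSym 0 2, hSym 0 3, hSym 1 2, hSym 1 3, hSym 2 3]
    ring
  have b34 : S.det * (starRingEnd ℂ) (S 2 3) =
      S 0 2*S 0 3*S 1 1 - S 0 1*S 0 3*S 1 2 - S 0 1*S 0 2*S 1 3 + S 0 1*S 0 1*S 2 3
      + S 0 0*S 1 2*S 1 3 - S 0 0*S 1 1*S 2 3 := by
    rw [bridge 2 3, Matrix.adjugate_apply, my_det_fin_four]
    simp [Matrix.updateRow_apply, Pi.single_apply,
      hSym 0 1, hSym 0 2, hSym 0 3, hSym 1 2, hSym 1 3, hSym 2 3]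
    ring
  have hdetE : S.det =
      S 0 3*S 0 3*S 1 2*S 1 2 - S 0 3*S 0 3*S 1 1*S 2 2 - 2*S 0 2*S 0 3*S 1 2*S 1 3
      + 2*S 0 2*S 0 3*S 1 1*S 2 3 + S 0 2*S 0 2*S 1 3*S 1 3 - S 0 2*S 0 2*S 1 1*S 3 3
      + 2*S 0 1*S 0 3*S 1 3*S 2 2 - 2*S 0 1*S 0 3*S 1 2*S 2 3 - 2*S 0 1*S 0 2*S 1 3*S 2 3
      + 2*S 0 1*S 0 2*S 1 2*S 3 3 + S 0 1*S 0 1*S 2 3*S 2 3 - S 0 1*S 0 1*S 2 2*S 3 3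
      - S 0 0*S 1 3*S 1 3*S 2 2 + 2*S 0 0*S 1 2*S 1 3*S 2 3 - S 0 0*S 1 2*S 1 2*S 3 3
      - S 0 0*S 1 1*S 2 3*S 2 3 + S 0 0*S 1 1*S 2 2*S 3 3 := by
    rw [my_det_fin_four, hSym 0 1, hSym 0 2, hSym 0 3, hSym 1 2, hSym 1 3, hSym 2 3]
    ring
  have c44e : (starRingEnd ℂ) (S 3 3) =
      (-(S 0 2*S 0 2*S 1 1) + 2*S 0 1*S 0 2*S 1 2 - S 0 1*S 0 1*S 2 2 - S 0 0*S 1 2*S 1 2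
      + S 0 0*S 1 1*S 2 2) / S.det := by
    rw [eq_div_iff hdet0]; linear_combination b44
  have c33e : (starRingEnd ℂ) (S 2 2) =
      (-(S 0 3*S 0 3*S 1 1) + 2*S 0 1*S 0 3*S 1 3 - S 0 1*S 0 1*S 3 3 - S 0 0*S 1 3*S 1 3
      + S 0 0*S 1 1*S 3 3) / S.det := by
    rw [eq_div_iff hdet0]; linear_combination b33
  have c34e : (starRingEnd ℂ) (S 2 3) =
      (S 0 2*S 0 3*S 1 1 - S 0 1*S 0 3*S 1 2 - S 0 1*S 0 2*S 1 3 + S 0 1*S 0 1*S 2 3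
      + S 0 0*S 1 2*S 1 3 - S 0 0*S 1 1*S 2 3) / S.det := by
    rw [eq_div_iff hdet0]; linear_combination b34
  have hB : (S 1 1)*((1+S 3 3)*S 2 2 - S 2 3*S 2 3) + 2*S 1 2*S 1 3*S 2 3
      - S 1 2*S 1 2*(1+S 3 3) - S 1 3*S 1 3*S 2 2
      = S.det * (1 + (starRingEnd ℂ) (S 3 3)) := by
    rw [c44e]
    field_simp
    rw [hdetE, e11, e12, e13, e14]
    ring
  have hA : S 1 3*S 1 3 - S 1 1*(1+S 3 3)
      = -(S.det * ((1 + (starRingEnd ℂ) (S 3 3)) * (starRingEnd ℂ) (S 2 2)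
          - (starRingEnd ℂ) (S 2 3) * (starRingEnd ℂ) (S 2 3))) := by
    rw [c44e, c33e, c34e]
    field_simp
    rw [hdetE, e11, e12, e13, e14]
    ring
  -- |alpha| = |beta|
  have hAc := congrArg (starRingEnd ℂ) hA
  have hBc := congrArg (starRingEnd ℂ) hB
  simp only [map_sub, map_add, map_mul, map_neg, map_one, map_ofNat, Complex.conj_conj] at hAc hBc
  have key : (S 1 3*S 1 3 - (S 1 1 + 1)*(1+S 3 3)) *
      ((starRingEnd ℂ) (S 1 3)*(starRingEnd ℂ) (S 1 3)
        - ((starRingEnd ℂ) (S 1 1) + 1)*(1+(starRingEnd ℂ) (S 3 3)))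
      = ((S 1 1 + 1)*((1+S 3 3)*S 2 2 - S 2 3*S 2 3) + 2*S 1 2*S 1 3*S 2 3
          - S 1 2*S 1 2*(1+S 3 3) - S 1 3*S 1 3*S 2 2) *
        (((starRingEnd ℂ) (S 1 1) + 1)*((1+(starRingEnd ℂ) (S 3 3))*(starRingEnd ℂ) (S 2 2)
            - (starRingEnd ℂ) (S 2 3)*(starRingEnd ℂ) (S 2 3))
          + 2*(starRingEnd ℂ) (S 1 2)*(starRingEnd ℂ) (S 1 3)*(starRingEnd ℂ) (S 2 3)
          - (starRingEnd ℂ) (S 1 2)*(starRingEnd ℂ) (S 1 2)*(1+(starRingEnd ℂ) (S 3 3))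
          - (starRingEnd ℂ) (S 1 3)*(starRingEnd ℂ) (S 1 3)*(starRingEnd ℂ) (S 2 2)) := by
    linear_combination
      ((starRingEnd ℂ) (S 1 3)*(starRingEnd ℂ) (S 1 3)
        - ((starRingEnd ℂ) (S 1 1) + 1)*(1+(starRingEnd ℂ) (S 3 3))) * hA
      + (-(S.det * ((1 + (starRingEnd ℂ) (S 3 3)) * (starRingEnd ℂ) (S 2 2)
          - (starRingEnd ℂ) (S 2 3) * (starRingEnd ℂ) (S 2 3))) - (1+S 3 3)) * hAc
      - (((starRingEnd ℂ) (S 1 1) + 1)*((1+(starRingEnd ℂ) (S 3 3))*(starRingEnd ℂ) (S 2 2)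
            - (starRingEnd ℂ) (S 2 3)*(starRingEnd ℂ) (S 2 3))
          + 2*(starRingEnd ℂ) (S 1 2)*(starRingEnd ℂ) (S 1 3)*(starRingEnd ℂ) (S 2 3)
          - (starRingEnd ℂ) (S 1 2)*(starRingEnd ℂ) (S 1 2)*(1+(starRingEnd ℂ) (S 3 3))
          - (starRingEnd ℂ) (S 1 3)*(starRingEnd ℂ) (S 1 3)*(starRingEnd ℂ) (S 2 2)) * hB
      - (S.det * (1+(starRingEnd ℂ) (S 3 3)) + ((1+S 3 3)*S 2 2 - S 2 3*S 2 3)) * hBc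
      + (((1+S 3 3)*S 2 2 - S 2 3*S 2 3) * ((1+(starRingEnd ℂ) (S 3 3))*(starRingEnd ℂ) (S 2 2)
            - (starRingEnd ℂ) (S 2 3)*(starRingEnd ℂ) (S 2 3))
          - (1+S 3 3)*(1+(starRingEnd ℂ) (S 3 3))) * hdetc
  have e1 : (starRingEnd ℂ) (S 1 3*S 1 3 - (S 1 1 + 1)*(1+S 3 3))
      = (starRingEnd ℂ) (S 1 3)*(starRingEnd ℂ) (S 1 3)
        - ((starRingEnd ℂ) (S 1 1) + 1)*(1+(starRingEnd ℂ) (S 3 3)) := by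
    simp only [map_sub, map_add, map_mul, map_one]
  have e2 : (starRingEnd ℂ) ((S 1 1 + 1)*((1+S 3 3)*S 2 2 - S 2 3*S 2 3) + 2*S 1 2*S 1 3*S 2 3
      - S 1 2*S 1 2*(1+S 3 3) - S 1 3*S 1 3*S 2 2)
      = ((starRingEnd ℂ) (S 1 1) + 1)*((1+(starRingEnd ℂ) (S 3 3))*(starRingEnd ℂ) (S 2 2)
            - (starRingEnd ℂ) (S 2 3)*(starRingEnd ℂ) (S 2 3))
          + 2*(starRingEnd ℂ) (S 1 2)*(starRingEnd ℂ) (S 1 3)*(starRingEnd ℂ) (S 2 3)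
          - (starRingEnd ℂ) (S 1 2)*(starRingEnd ℂ) (S 1 2)*(1+(starRingEnd ℂ) (S 3 3))
          - (starRingEnd ℂ) (S 1 3)*(starRingEnd ℂ) (S 1 3)*(starRingEnd ℂ) (S 2 2) := by
    simp only [map_sub, map_add, map_mul, map_one, map_ofNat]
  rw [← e1, ← e2] at key
  rw [Complex.mul_conj, Complex.mul_conj] at key
  have habs : ‖S 1 3*S 1 3 - (S 1 1 + 1)*(1+S 3 3)‖ =
      ‖(S 1 1 + 1)*((1+S 3 3)*S 2 2 - S 2 3*S 2 3) + 2*S 1 2*S 1 3*S 2 3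
        - S 1 2*S 1 2*(1+S 3 3) - S 1 3*S 1 3*S 2 2‖ := by
    rw [Complex.norm_def, Complex.norm_def, Complex.ofReal_inj.mp key]
  -- abbreviations
  set α := S 1 3*S 1 3 - (S 1 1 + 1)*(1+S 3 3) with hαdef
  set β := (S 1 1 + 1)*((1+S 3 3)*S 2 2 - S 2 3*S 2 3) + 2*S 1 2*S 1 3*S 2 3
      - S 1 2*S 1 2*(1+S 3 3) - S 1 3*S 1 3*S 2 2 with hβdef
  -- |z|=1 facts
  have hzabs : ∀ L : ℝ, ‖Complex.exp (-(2 * Complex.I * (k:ℂ) * (L:ℂ)))‖ = 1 := by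
    intro L
    rw [Complex.norm_exp]
    have : (-(2 * Complex.I * (k:ℂ) * (L:ℂ))).re = 0 := by simp
    rw [this, Real.exp_zero]
  have haprime : ‖S 2 2 - S 2 3*S 2 3/(1+S 3 3)‖ ≠ 1 := by
    have heq : S 0 2 * S 2 3 / S 0 3 = S 2 3*S 2 3/(1+S 3 3) := by
      rw [e13, e14]; field_simp
    rwa [heq] at ha
  have hD : ∀ z : ℂ, ‖z‖ = 1 →
      (1 + S 3 3) * (-z + S 2 2) - S 2 3 * S 2 3 ≠ 0 := by
    intro z hz h0
    apply haprime
    have hzz : S 2 2 - S 2 3*S 2 3/(1+S 3 3) = z := by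
      field_simp
      linear_combination h0
    rw [hzz, hz]
  -- the main equation lemma
  have main : ∀ L : ℝ, α * Complex.exp (-(2 * Complex.I * (k:ℂ) * (L:ℂ))) + β = 0 →
      S 1 1
        + (S 1 3 * S 3 2 * S 2 1 - S 1 2 * (1 + S 3 3) * S 2 1)
            / ((1 + S 3 3) * (-Complex.exp (-(2 * Complex.I * (k : ℂ) * (L : ℂ))) + S 2 2)
                - S 2 3 * S 3 2)
        + (S 1 3 * (Complex.exp (-(2 * Complex.I * (k : ℂ) * (L : ℂ))) - S 2 2) * S 3 1
            + S 1 2 * S 2 3 * S 3 1)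
            / ((1 + S 3 3) * (-Complex.exp (-(2 * Complex.I * (k : ℂ) * (L : ℂ))) + S 2 2)
                - S 2 3 * S 3 2)
      = -1 := by
    intro L h0
    rw [hSym 1 2, hSym 1 3, hSym 2 3]
    have hDL := hD _ (hzabs L)
    rw [add_assoc, ← add_div, add_div' _ _ _ hDL, div_eq_iff hDL]
    linear_combination h0
  by_cases hα : α = 0
  · -- every L > 1 works
    have hβ : β = 0 := by
      rw [hα] at habs
      simp only [norm_zero] at habs
      exact norm_eq_zero.mp habs.symm
    apply Set.Infinite.mono _ (Set.Ioi_infinite (1:ℝ))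
    intro L hL
    exact ⟨hL, main L (by rw [hα, hβ]; ring)⟩
  · -- take z0 = -β/α on the unit circle
    have habs0 : ‖α‖ ≠ 0 := norm_ne_zero_iff.mpr hα
    have hz1 : ‖-β/α‖ = 1 := by
      rw [norm_div, norm_neg, ← habs, div_self habs0]
    have hexp : Complex.exp (((-β/α).arg : ℂ) * Complex.I) = -β/α := by
      have h := Complex.norm_mul_exp_arg_mul_I (-β/α)
      rwa [hz1, Complex.ofReal_one, one_mul] at h
    set θ : ℝ := (-β/α).arg with hθ
    have hpik : (0:ℝ) < Real.pi/k := div_pos Real.pi_pos hk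
    obtain ⟨N, hN⟩ := exists_nat_gt ((1 - (-θ/(2*k)))/(Real.pi/k))
    set f : ℕ → ℝ := fun n => -θ/(2*k) + Real.pi/k*(N+1+n) with hf
    have hinj : Function.Injective f := by
      intro a b hab
      simp only [hf] at hab
      have h2 := mul_left_cancel₀ (ne_of_gt hpik) (add_left_cancel hab)
      have h3 : (a:ℝ) = b := by linarith
      exact_mod_cast h3
    apply Set.infinite_of_injective_forall_mem hinj
    intro n
    have hL1 : 1 < f n := by
      have hdiv := (div_lt_iff₀ hpik).mp hN
      have h2 : (0:ℝ) ≤ Real.pi/k*(1+n) := by positivity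
      have h3 : Real.pi/k*(N+1+n) = Real.pi/k*N + Real.pi/k*(1+n) := by ring
      simp only [hf]
      nlinarith
    have hk0 : (k:ℂ) ≠ 0 := Complex.ofReal_ne_zero.mpr (ne_of_gt hk)
    have hexp2 : Complex.exp (-(2 * Complex.I * (k:ℂ) * ((f n : ℝ):ℂ))) = -β/α := by
      have harg : -(2 * Complex.I * (k:ℂ) * ((f n : ℝ):ℂ))
          = (θ:ℂ) * Complex.I + ((-(N+1+n : ℤ) : ℤ) : ℂ) * (2*(Real.pi:ℂ)*Complex.I) := by
        simp only [hf]
        push_cast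
        field_simp
        ring
      rw [harg, Complex.exp_add, Complex.exp_int_mul_two_pi_mul_I, mul_one, hexp]
    refine ⟨hL1, main (f n) ?_⟩
    rw [hexp2]
    field_simp
    ring
end
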